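/- arXiv:2501.12306 — 10 statements merged into one kernel-verified Lean document; each statement's English description precedes it below -/
import Mathlib

section
/- Let s1 = p1p3 and s2 = p2p4 be two segments crossing at a point x. If a line l strictly separates the segments p1p4 and p2p3 (obtained after a flip), then l crossed both original segments p1p3 and p2p4; hence the flip decreases the number of removed-and-inserted segments crossed by l by exactly 2. -/
noncomputable section

abbrev Pt := EuclideanSpace ℝ (Fin 2)

/-- Two segments cross: unique intersection point, interior to both. -/
def SegCross (a b c d : Pt) : Prop :=
  ∃ x, x ∈ openSegment ℝ a b ∧ x ∈ openSegment ℝ c d ∧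
    ∀ y ∈ segment ℝ a b, y ∈ segment ℝ c d → y = x

/-- The line `{x | f x = c}` crosses the segment `ab`: they meet in exactly
one point which is not an endpoint of the segment. -/
def LCross (f : Pt →ₗ[ℝ] ℝ) (c : ℝ) (a b : Pt) : Prop :=
  ∃ x ∈ segment ℝ a b, f x = c ∧ x ≠ a ∧ x ≠ b ∧
    ∀ y ∈ segment ℝ a b, f y = c → y = x

/-- The line `{x | f x = c}` strictly separates the segments `ab` and `a'b'`:
they lie in the two distinct open half-planes determined by the line. -/
def StrictSep (f : Pt →ₗ[ℝ] ℝ) (c : ℝ) (a b a' b' : Pt) : Prop :=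
  ((∀ x ∈ segment ℝ a b, f x < c) ∧ (∀ x ∈ segment ℝ a' b', c < f x)) ∨
  ((∀ x ∈ segment ℝ a b, c < f x) ∧ (∀ x ∈ segment ℝ a' b', f x < c))

lemma lcross_of_lt (f : Pt →ₗ[ℝ] ℝ) (c : ℝ) (a b : Pt) (ha : f a < c) (hb : c < f b) :
    LCross f c a b := by
  have hd : 0 < f b - f a := by linarith
  set t : ℝ := (c - f a) / (f b - f a) with ht
  have htd : t * (f b - f a) = c - f a := div_mul_cancel₀ _ (ne_of_gt hd)
  have ht0 : 0 < t := div_pos (by linarith) hd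
  have ht1 : t < 1 := (div_lt_one hd).2 (by linarith)
  have hfx : f (a + t • (b - a)) = c := by
    simp only [map_add, map_smul, map_sub, smul_eq_mul]
    linarith [htd]
  refine ⟨a + t • (b - a), ?_, hfx, ?_, ?_, ?_⟩
  · rw [segment_eq_image']; exact ⟨t, ⟨le_of_lt ht0, le_of_lt ht1⟩, rfl⟩
  · intro h; rw [h] at hfx; linarith
  · intro h; rw [h] at hfx; linarith
  · intro y hy hfy
    rw [segment_eq_image'] at hy
    obtain ⟨s, hs, rfl⟩ := hy
    have : f a + s * (f b - f a) = c := by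
      simpa only [map_add, map_smul, map_sub, smul_eq_mul] using hfy
    have hst : s = t := by
      rw [ht, eq_div_iff (ne_of_gt hd)]
      linarith
    rw [hst]

lemma lcross_symm {f : Pt →ₗ[ℝ] ℝ} {c : ℝ} {a b : Pt} (h : LCross f c a b) :
    LCross f c b a := by
  obtain ⟨x, hx, hfx, hxa, hxb, huniq⟩ := h
  exact ⟨x, segment_symm ℝ b a ▸ hx, hfx, hxb, hxa,
    fun y hy hfy => huniq y (segment_symm ℝ a b ▸ hy) hfy⟩

lemma not_lcross_of_lt (f : Pt →ₗ[ℝ] ℝ) (c : ℝ) (a b : Pt)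
    (h : ∀ x ∈ segment ℝ a b, f x < c) : ¬ LCross f c a b := by
  rintro ⟨x, hx, hfx, -⟩
  exact absurd hfx (ne_of_lt (h x hx))

lemma not_lcross_of_gt (f : Pt →ₗ[ℝ] ℝ) (c : ℝ) (a b : Pt)
    (h : ∀ x ∈ segment ℝ a b, c < f x) : ¬ LCross f c a b := by
  rintro ⟨x, hx, hfx, -⟩
  exact absurd hfx.symm (ne_of_lt (h x hx))

/-- If a line strictly separates the inserted segments `p1p4` and `p2p3` of a flip,
then it crossed both removed segments `p1p3` and `p2p4` (and of course crosses
neither inserted segment), so the number of removed-and-inserted segments crossed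
by the line drops by exactly 2. -/
theorem flip_dropping_line (p1 p2 p3 p4 : Pt) (f : Pt →ₗ[ℝ] ℝ) (c : ℝ)
    (hf : f ≠ 0)
    (hgp : ∀ a b c', a ∈ ({p1, p2, p3, p4} : Set Pt) → b ∈ ({p1, p2, p3, p4} : Set Pt) →
      c' ∈ ({p1, p2, p3, p4} : Set Pt) → a ≠ b → a ≠ c' → b ≠ c' →
      ¬ Collinear ℝ ({a, b, c'} : Set Pt))
    (hcross : SegCross p1 p3 p2 p4)
    (hsep : StrictSep f c p1 p4 p2 p3) :
    LCross f c p1 p3 ∧ LCross f c p2 p4 ∧ ¬ LCross f c p1 p4 ∧ ¬ LCross f c p2 p3 := by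
  rcases hsep with ⟨h14, h23⟩ | ⟨h14, h23⟩
  · have h1 := h14 p1 (left_mem_segment ℝ p1 p4)
    have h4 := h14 p4 (right_mem_segment ℝ p1 p4)
    have h2 := h23 p2 (left_mem_segment ℝ p2 p3)
    have h3 := h23 p3 (right_mem_segment ℝ p2 p3)
    exact ⟨lcross_of_lt f c p1 p3 h1 h3, lcross_symm (lcross_of_lt f c p4 p2 h4 h2),
      not_lcross_of_lt f c p1 p4 h14, not_lcross_of_gt f c p2 p3 h23⟩
  · have h1 := h14 p1 (left_mem_segment ℝ p1 p4)
    have h4 := h14 p4 (right_mem_segment ℝ p1 p4)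
    have h2 := h23 p2 (left_mem_segment ℝ p2 p3)
    have h3 := h23 p3 (right_mem_segment ℝ p2 p3)
    exact ⟨lcross_symm (lcross_of_lt f c p3 p1 h3 h1), lcross_of_lt f c p2 p4 h2 h4,
      not_lcross_of_gt f c p1 p4 h14, not_lcross_of_lt f c p2 p3 h23⟩
end
end

section
/- A flip never increases the number of segments of the flipped pair crossed by any fixed line: for any line l and any flip replacing crossing segments p1p3, p2p4 by non-crossing segments p1p4, p2p3, the number of segments among {p1p4, p2p3} crossed by l is at most the number among {p1p3, p2p4} crossed by l. -/
noncomputable section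

lemma seg_comb (f : Pt →ₗ[ℝ] ℝ) {a b x : Pt} (hx : x ∈ segment ℝ a b) :
    ∃ u v : ℝ, 0 ≤ u ∧ 0 ≤ v ∧ u + v = 1 ∧ f x = u * f a + v * f b := by
  obtain ⟨u, v, hu, hv, huv, rfl⟩ := hx
  exact ⟨u, v, hu, hv, huv, by simp [map_add, map_smul, smul_eq_mul]⟩

lemma comb_pos_ne {u v A B : ℝ} (hu : 0 ≤ u) (hv : 0 ≤ v) (huv : u + v = 1)
    (hA : 0 < A) (hB : 0 < B) (e : u * A + v * B = 0) : False := by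
  have h1 : u * A = 0 := by nlinarith [mul_nonneg hu hA.le, mul_nonneg hv hB.le]
  have h2 : v * B = 0 := by linarith
  have hu0 : u = 0 := by rcases mul_eq_zero.mp h1 with h | h; exacts [h, absurd h hA.ne']
  have hv0 : v = 0 := by rcases mul_eq_zero.mp h2 with h | h; exacts [h, absurd h hB.ne']
  linarith

lemma lcross_of {f : Pt →ₗ[ℝ] ℝ} {c : ℝ} {a b : Pt} (ha : f a < c) (hb : c < f b) :
    LCross f c a b := by
  set t : ℝ := (c - f a) / (f b - f a) with ht
  have hba : 0 < f b - f a := by linarith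
  have ht0 : 0 < t := div_pos (by linarith) hba
  have ht1 : t < 1 := (div_lt_one hba).mpr (by linarith)
  refine ⟨(1 - t) • a + t • b, ⟨1 - t, t, by linarith, ht0.le, by ring, rfl⟩, ?_, ?_, ?_, ?_⟩
  · have : (1 - t) * f a + t * f b = c := by
      have htm : t * (f b - f a) = c - f a := by rw [ht]; exact div_mul_cancel₀ _ hba.ne'
      linear_combination htm
    simpa [map_add, map_smul, smul_eq_mul] using this
  · intro h
    have : f ((1 - t) • a + t • b) = f a := by rw [h]
    rw [map_add, map_smul, map_smul, smul_eq_mul, smul_eq_mul] at this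
    have : t * (f b - f a) = 0 := by linarith
    rcases mul_eq_zero.mp this with h' | h' <;> nlinarith
  · intro h
    have : f ((1 - t) • a + t • b) = f b := by rw [h]
    rw [map_add, map_smul, map_smul, smul_eq_mul, smul_eq_mul] at this
    have : (1 - t) * (f b - f a) = 0 := by linarith
    rcases mul_eq_zero.mp this with h' | h' <;> nlinarith
  · rintro y ⟨u, v, hu, hv, huv, rfl⟩ hfy
    rw [map_add, map_smul, map_smul, smul_eq_mul, smul_eq_mul] at hfy
    have hv' : v = t := by
      rw [ht, eq_div_iff hba.ne']
      linear_combination hfy - f a * huv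
    have hu' : u = 1 - t := by rw [← hv']; linarith
    rw [hu', hv']

lemma lcross_iff {f : Pt →ₗ[ℝ] ℝ} {c : ℝ} {a b : Pt} (ha : f a ≠ c) (hb : f b ≠ c) :
    LCross f c a b ↔ (f a - c) * (f b - c) < 0 := by
  constructor
  · rintro ⟨x, hx, hfx, -, -, -⟩
    obtain ⟨u, v, hu, hv, huv, hfx'⟩ := seg_comb f hx
    have e : u * (f a - c) + v * (f b - c) = 0 := by
      have h0 : u * f a + v * f b = c := hfx'.symm.trans hfx
      linear_combination h0 - c * huv
    by_contra hcon
    push_neg at hcon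
    have hA : f a - c ≠ 0 := sub_ne_zero.mpr ha
    have hB : f b - c ≠ 0 := sub_ne_zero.mpr hb
    have hprod : 0 < (f a - c) * (f b - c) :=
      lt_of_le_of_ne hcon (Ne.symm (mul_ne_zero hA hB))
    rcases lt_or_gt_of_ne hA with h1 | h1
    · have h2 : f b - c < 0 := by nlinarith
      exact comb_pos_ne hu hv huv (by linarith : (0:ℝ) < -(f a - c))
        (by linarith : (0:ℝ) < -(f b - c)) (by linarith)
    · have h2 : 0 < f b - c := by nlinarith
      exact comb_pos_ne hu hv huv h1 h2 e
  · intro h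
    rcases lt_or_gt_of_ne (sub_ne_zero.mpr ha) with h1 | h1
    · have h2 : c < f b := by nlinarith
      exact lcross_of (by linarith) h2
    · have h2 : f b < c := by nlinarith
      exact lcross_symm (lcross_of (by linarith) (by linarith))

open Classical in
/-- A flip never increases the number of segments of the flipped pair crossed by a
fixed line: the number of segments among `{p1p4, p2p3}` crossed by the line is at
most the number among `{p1p3, p2p4}` crossed by it. -/
theorem flip_line_potential_monotone (p1 p2 p3 p4 : Pt) (f : Pt →ₗ[ℝ] ℝ) (c : ℝ)
    (hf : f ≠ 0)
    (hgp : ∀ a b c', a ∈ ({p1, p2, p3, p4} : Set Pt) → b ∈ ({p1, p2, p3, p4} : Set Pt) →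
      c' ∈ ({p1, p2, p3, p4} : Set Pt) → a ≠ b → a ≠ c' → b ≠ c' →
      ¬ Collinear ℝ ({a, b, c'} : Set Pt))
    (hcross : SegCross p1 p3 p2 p4)
    (hnocross : ¬ SegCross p1 p4 p2 p3)
    (h1 : f p1 ≠ c) (h2 : f p2 ≠ c) (h3 : f p3 ≠ c) (h4 : f p4 ≠ c) :
    (if LCross f c p1 p4 then 1 else 0) + (if LCross f c p2 p3 then 1 else 0) ≤
      (if LCross f c p1 p3 then 1 else 0) + (if LCross f c p2 p4 then 1 else 0) := by
  obtain ⟨x, hx13, hx24, -⟩ := hcross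
  have e13 : ∃ u v : ℝ, 0 < u ∧ 0 < v ∧ u + v = 1 ∧ f x = u * f p1 + v * f p3 := by
    obtain ⟨u, v, hu, hv, huv, hxe⟩ := hx13
    exact ⟨u, v, hu, hv, huv, by rw [← hxe]; simp [map_add, map_smul, smul_eq_mul]⟩
  have e24 : ∃ u v : ℝ, 0 < u ∧ 0 < v ∧ u + v = 1 ∧ f x = u * f p2 + v * f p4 := by
    obtain ⟨u, v, hu, hv, huv, hxe⟩ := hx24
    exact ⟨u, v, hu, hv, huv, by rw [← hxe]; simp [map_add, map_smul, smul_eq_mul]⟩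
  obtain ⟨u, v, hu, hv, huv, exe⟩ := e13
  obtain ⟨u', v', hu', hv', huv', exe'⟩ := e24
  have d13 : f x - c = u * (f p1 - c) + v * (f p3 - c) := by linear_combination exe + c * huv
  have d24 : f x - c = u' * (f p2 - c) + v' * (f p4 - c) := by linear_combination exe' + c * huv'
  have H : ¬ (0 < (f p1 - c) * (f p3 - c) ∧ 0 < (f p2 - c) * (f p4 - c) ∧
      (f p1 - c) * (f p2 - c) < 0) := by
    rintro ⟨h13, h24, h12⟩
    rcases lt_or_gt_of_ne (sub_ne_zero.mpr h1) with hA1 | hA1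
    · have hA3 : f p3 - c < 0 := by nlinarith
      have hA2 : 0 < f p2 - c := by nlinarith
      have hA4 : 0 < f p4 - c := by nlinarith
      nlinarith [mul_neg_of_pos_of_neg hu hA1, mul_neg_of_pos_of_neg hv hA3,
        mul_pos hu' hA2, mul_pos hv' hA4]
    · have hA3 : 0 < f p3 - c := by nlinarith
      have hA2 : f p2 - c < 0 := by nlinarith
      have hA4 : f p4 - c < 0 := by nlinarith
      nlinarith [mul_pos hu hA1, mul_pos hv hA3,
        mul_neg_of_pos_of_neg hu' hA2, mul_neg_of_pos_of_neg hv' hA4]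
  simp only [lcross_iff h1 h4, lcross_iff h2 h3, lcross_iff h1 h3, lcross_iff h2 h4]
  by_cases q13 : (f p1 - c) * (f p3 - c) < 0
  · by_cases q24 : (f p2 - c) * (f p4 - c) < 0
    · simp only [if_pos q13, if_pos q24]
      split_ifs <;> omega
    · have h24' : 0 < (f p2 - c) * (f p4 - c) :=
        lt_of_le_of_ne (not_lt.mp q24)
          (Ne.symm (mul_ne_zero (sub_ne_zero.mpr h2) (sub_ne_zero.mpr h4)))
      rw [if_pos q13, if_neg q24]
      by_cases q14 : (f p1 - c) * (f p4 - c) < 0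
      · by_cases q23 : (f p2 - c) * (f p3 - c) < 0
        · exfalso
          nlinarith [mul_pos_of_neg_of_neg q14 q23, mul_neg_of_neg_of_pos q13 h24']
        · rw [if_pos q14, if_neg q23]
      · rw [if_neg q14]; split_ifs <;> omega
  · have h13' : 0 < (f p1 - c) * (f p3 - c) :=
      lt_of_le_of_ne (not_lt.mp q13)
        (Ne.symm (mul_ne_zero (sub_ne_zero.mpr h1) (sub_ne_zero.mpr h3)))
    by_cases q24 : (f p2 - c) * (f p4 - c) < 0
    · rw [if_neg q13, if_pos q24]
      by_cases q14 : (f p1 - c) * (f p4 - c) < 0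
      · by_cases q23 : (f p2 - c) * (f p3 - c) < 0
        · exfalso
          nlinarith [mul_pos_of_neg_of_neg q14 q23, mul_neg_of_pos_of_neg h13' q24]
        · rw [if_pos q14, if_neg q23]
      · rw [if_neg q14]; split_ifs <;> omega
    · have h24' : 0 < (f p2 - c) * (f p4 - c) :=
        lt_of_le_of_ne (not_lt.mp q24)
          (Ne.symm (mul_ne_zero (sub_ne_zero.mpr h2) (sub_ne_zero.mpr h4)))
      have hq14 : ¬ ((f p1 - c) * (f p4 - c) < 0) := fun q14 =>
        H ⟨h13', h24', by nlinarith [mul_neg_of_neg_of_pos q14 h24', sq_nonneg (f p4 - c)]⟩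
      have hq23 : ¬ ((f p2 - c) * (f p3 - c) < 0) := fun q23 =>
        H ⟨h13', h24', by nlinarith [mul_neg_of_pos_of_neg h13' q23, sq_nonneg (f p3 - c)]⟩
      rw [if_neg hq14, if_neg hq23]
      exact Nat.zero_le _
end
end

section
/- Let p1p3 and p2p4 be crossing segments meeting at point x, and let q be a point in the open triangle with vertices p1, x, p4. Then the line through q and p1 crosses the segment p2p4, and the line through q and p4 crosses the segment p1p3. -/
noncomputable section

/-- The line through `a` and `b` crosses the segment `cd`: they meet in exactly
one point, which is not an endpoint of the segment. -/
def LineThroughCrosses (a b c d : Pt) : Prop :=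
  ∃ x ∈ segment ℝ c d, Collinear ℝ ({a, b, x} : Set Pt) ∧ x ≠ c ∧ x ≠ d ∧
    ∀ y ∈ segment ℝ c d, Collinear ℝ ({a, b, y} : Set Pt) → y = x

lemma lineThroughCrosses_symm {a b c d : Pt} (h : LineThroughCrosses a b c d) :
    LineThroughCrosses a b d c := by
  obtain ⟨z, hz, hcol, hzc, hzd, huniq⟩ := h
  exact ⟨z, segment_symm ℝ c d ▸ hz, hcol, hzd, hzc,
    fun y hy hycol => huniq y (segment_symm ℝ d c ▸ hy) hycol⟩

lemma cross_aux (a c d e q : Pt)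
    (he : e ∈ openSegment ℝ c d)
    (hnc : ¬ Collinear ℝ ({a, e, d} : Set Pt))
    (hq : q ∈ interior (convexHull ℝ ({a, e, d} : Set Pt)))
    (hqa : q ≠ a) :
    LineThroughCrosses q a c d := by
  have hcd : c ≠ d := by
    rintro rfl
    rw [openSegment_same] at he
    rw [Set.mem_singleton_iff] at he
    subst he
    exact hnc ((collinear_pair ℝ a e).subset (by simp [Set.insert_subset_iff]))
  -- affine basis
  have hai : AffineIndependent ℝ ![a, e, d] := by
    rw [affineIndependent_iff_not_collinear]
    convert hnc using 2
    ext z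
    simp [Matrix.range_cons, Matrix.range_empty]
    tauto
  have htop : affineSpan ℝ (Set.range ![a, e, d]) = ⊤ := by
    rw [hai.affineSpan_eq_top_iff_card_eq_finrank_add_one]
    simp [finrank_euclideanSpace_fin]
  let b : AffineBasis (Fin 3) ℝ Pt := ⟨![a, e, d], hai, htop⟩
  have hrange : Set.range (b : Fin 3 → Pt) = ({a, e, d} : Set Pt) := by
    show Set.range ![a, e, d] = _
    ext z
    simp [Matrix.range_cons, Matrix.range_empty]
    tauto
  have hpos : ∀ i, 0 < b.coord i q := by
    rw [← hrange, b.interior_convexHull] at hq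
    exact hq
  set α := b.coord 0 q with hα
  set β := b.coord 1 q with hβ
  set γ := b.coord 2 q with hγ
  have hsum : α + β + γ = 1 := by
    have := b.sum_coord_apply_eq_one q
    rwa [Fin.sum_univ_three] at this
  have hcomb : α • a + β • e + γ • d = q := by
    have := b.linear_combination_coord_eq_self q
    rwa [Fin.sum_univ_three] at this
  have hα0 : 0 < α := hpos 0
  have hβ0 : 0 < β := hpos 1
  have hγ0 : 0 < γ := hpos 2
  have hβγ : 0 < β + γ := by linarith
  -- the crossing point
  set y : Pt := (β / (β + γ)) • e + (γ / (β + γ)) • d with hy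
  clear_value y
  have hyo : y ∈ openSegment ℝ c d := by
    obtain ⟨u, v, hu, hv, huv, hue⟩ := he
    refine ⟨β / (β + γ) * u, β / (β + γ) * v + γ / (β + γ), ?_, ?_, ?_, ?_⟩
    · positivity
    · positivity
    · have huv' : u = 1 - v := by linarith
      subst huv'
      field_simp
      ring
    · rw [hy, ← hue]
      module
  have hyc : y ≠ c := by
    rintro rfl
    exact hcd (left_mem_openSegment_iff.mp hyo)
  have hyd : y ≠ d := by
    rintro rfl
    rw [openSegment_symm] at hyo
    exact hcd (left_mem_openSegment_iff.mp hyo).symm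
  have hqline : q ∈ line[ℝ, a, y] := by
    have hseg : q ∈ segment ℝ a y := by
      refine ⟨α, β + γ, le_of_lt hα0, le_of_lt hβγ, by linarith, ?_⟩
      rw [hy, ← hcomb]
      have h1 : (β + γ) ≠ 0 := ne_of_gt hβγ
      rw [smul_add, smul_smul, smul_smul, mul_div_cancel₀ _ h1, mul_div_cancel₀ _ h1]
      module
    exact (AffineSubspace.convex _).segment_subset (left_mem_affineSpan_pair ℝ a y)
      (right_mem_affineSpan_pair ℝ a y) hseg
  have hcolqa : Collinear ℝ ({q, a, y} : Set Pt) := collinear_insert_of_mem_affineSpan_pair hqline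
  have hyline : y ∈ line[ℝ, c, d] :=
    (AffineSubspace.convex _).segment_subset (left_mem_affineSpan_pair ℝ c d)
      (right_mem_affineSpan_pair ℝ c d) (openSegment_subset_segment ℝ c d hyo)
  have heline : e ∈ line[ℝ, c, d] :=
    (AffineSubspace.convex _).segment_subset (left_mem_affineSpan_pair ℝ c d)
      (right_mem_affineSpan_pair ℝ c d) (openSegment_subset_segment ℝ c d he)
  refine ⟨y, openSegment_subset_segment ℝ c d hyo, hcolqa, hyc, hyd, ?_⟩
  intro y' hy' hcol'
  by_contra hne
  have hy'line : y' ∈ line[ℝ, c, d] :=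
    (AffineSubspace.convex _).segment_subset (left_mem_affineSpan_pair ℝ c d)
      (right_mem_affineSpan_pair ℝ c d) hy'
  have hbig : Collinear ℝ ({y', q, a, y} : Set Pt) := by
    rw [hcolqa.collinear_insert_iff_of_ne (by simp) (by simp : a ∈ ({q, a, y} : Set Pt)) hqa]
    exact hcol'.subset (by intro z hz; simp at hz ⊢; tauto)
  have haline : a ∈ line[ℝ, y', y] :=
    hbig.mem_affineSpan_of_mem_of_ne (by simp) (by simp) (by simp) hne
  have hle : line[ℝ, y', y] ≤ line[ℝ, c, d] := by
    rw [affineSpan_le]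
    intro z hz
    simp at hz
    rcases hz with rfl | rfl
    · exact hy'line
    · exact hyline
  exact hnc (collinear_triple_of_mem_affineSpan_pair (hle haline) heline
    (right_mem_affineSpan_pair ℝ c d))

/-- If `p1p3` and `p2p4` cross at `x` and `q` lies in the open triangle `p1 x p4`,
then the line through `q` and `p1` crosses the segment `p2p4`, and the line
through `q` and `p4` crosses the segment `p1p3`. -/
theorem critical_lines_through_triangle (p1 p2 p3 p4 x q : Pt)
    (hx1 : x ∈ openSegment ℝ p1 p3) (hx2 : x ∈ openSegment ℝ p2 p4)
    (huniq : ∀ y ∈ segment ℝ p1 p3, y ∈ segment ℝ p2 p4 → y = x)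
    (hnc : ¬ Collinear ℝ ({p1, x, p4} : Set Pt))
    (hq : q ∈ interior (convexHull ℝ ({p1, x, p4} : Set Pt)))
    (hq1 : q ≠ p1) (hq2 : q ≠ p2) (hq3 : q ≠ p3) (hq4 : q ≠ p4) :
    LineThroughCrosses q p1 p2 p4 ∧ LineThroughCrosses q p4 p1 p3 := by
  have hset : ({p4, x, p1} : Set Pt) = ({p1, x, p4} : Set Pt) := by
    ext z; simp; tauto
  constructor
  · exact cross_aux p1 p2 p4 x q hx2 hnc hq hq1
  · have h := cross_aux p4 p3 p1 x q (openSegment_symm ℝ p1 p3 ▸ hx1)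
      (hset ▸ hnc) (hset ▸ hq) hq4
    exact lineThroughCrosses_symm h
end
end

section
/- For any triangle p1p2p3 and any segment qq' intersecting the interior of the triangle p1p2p3, there exists a segment s among qp1, qp2, qp3, q'p1, q'p2, q'p3 that intersects the interior of the triangle p1p2p3. -/
noncomputable section

/-- If one barycentric coordinate of `r` vanishes, `r` lies on the line through the
other two basis points. -/
lemma mem_span_of_coord_zero (b : AffineBasis (Fin 3) ℝ Pt) (r : Pt) (i j k : Fin 3)
    (hij : j ≠ i) (hik : k ≠ i) (hjk : j ≠ k) (h0 : b.coord i r = 0) :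
    r ∈ line[ℝ, b j, b k] := by
  have huniv : ({i, j, k} : Finset (Fin 3)) = Finset.univ := by
    apply Finset.eq_univ_of_card
    rw [Finset.card_insert_of_notMem (by simp [hij.symm, hik.symm]),
      Finset.card_insert_of_notMem (by simp [hjk]), Finset.card_singleton]
    decide
  have hcomb := b.linear_combination_coord_eq_self r
  rw [← huniv, Finset.sum_insert (by simp [hij.symm, hik.symm]),
    Finset.sum_insert (by simp [hjk]), Finset.sum_singleton, h0, zero_smul, zero_add] at hcomb
  have hsum := b.sum_coord_apply_eq_one r
  rw [← huniv, Finset.sum_insert (by simp [hij.symm, hik.symm]),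
    Finset.sum_insert (by simp [hjk]), Finset.sum_singleton, h0, zero_add] at hsum
  set cj := b.coord j r with hcj
  set ck := b.coord k r with hck
  have : r = AffineMap.lineMap (b j) (b k) ck := by
    rw [AffineMap.lineMap_apply, ← hcomb]
    have hj : cj = 1 - ck := by linarith
    rw [hj]
    simp only [vsub_eq_sub, vadd_eq_add]
    module
  rw [this]
  exact AffineMap.lineMap_mem_affineSpan_pair _ _ _

/-- Combinatorial core: given two sign vectors on `Fin 3` with no common nonpositive
coordinate, one of them has at most one nonpositive coordinate. -/
lemma tri_sign (μ ν : Fin 3 → ℝ) (h : ∀ i, 0 < μ i ∨ 0 < ν i) :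
    (∃ i, ∀ j, j ≠ i → 0 < μ j) ∨ (∃ i, ∀ j, j ≠ i → 0 < ν j) := by
  by_contra hc
  push_neg at hc
  obtain ⟨h1, h2⟩ := hc
  obtain ⟨a, ha, ha'⟩ := h1 0
  obtain ⟨a', haa, ha''⟩ := h1 a
  obtain ⟨c, hcoo, hc'⟩ := h2 0
  obtain ⟨c', hcc, hc''⟩ := h2 c
  have hac : a ≠ c := by rintro rfl; rcases h a with h | h <;> linarith
  have hac' : a ≠ c' := by rintro rfl; rcases h a with h | h <;> linarith
  have hxc : a' ≠ c := by rintro rfl; rcases h a' with h | h <;> linarith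
  have ha'c' : a' ≠ c' := by rintro rfl; rcases h a' with h | h <;> linarith
  have := a.isLt; have := a'.isLt; have := c.isLt; have := c'.isLt
  have : a.val ≠ c.val := fun h => hac (Fin.val_injective h)
  have : a.val ≠ c'.val := fun h => hac' (Fin.val_injective h)
  have : a'.val ≠ c.val := fun h => hxc (Fin.val_injective h)
  have : a'.val ≠ c'.val := fun h => ha'c' (Fin.val_injective h)
  have : a'.val ≠ a.val := fun h => haa (Fin.val_injective h)
  have : c'.val ≠ c.val := fun h => hcc (Fin.val_injective h)
  omega

/-- If all barycentric coordinates of `r` except possibly the `i`-th are positive, then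
the segment from `r` to the `i`-th vertex contains a point with all coordinates positive. -/
lemma seg_to_vertex (b : AffineBasis (Fin 3) ℝ Pt) (r : Pt) (i : Fin 3)
    (h : ∀ j, j ≠ i → 0 < b.coord j r) :
    ∃ z ∈ segment ℝ r (b i), ∀ j, 0 < b.coord j z := by
  set c := b.coord i r with hc
  set s : ℝ := (2 * |c| + 1) / (2 * |c| + 2) with hs
  have habs := abs_nonneg c
  have hs0 : 0 ≤ s := by positivity
  have hs1 : s < 1 := by
    rw [hs, div_lt_one (by positivity)]; linarith
  refine ⟨AffineMap.lineMap r (b i) s, ?_, ?_⟩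
  · rw [segment_eq_image_lineMap]; exact ⟨s, ⟨hs0, hs1.le⟩, rfl⟩
  · intro j
    rcases eq_or_ne j i with rfl | hji
    · rw [(b.coord j).apply_lineMap, AffineMap.lineMap_apply, b.coord_apply, if_pos rfl]
      simp only [vsub_eq_sub, vadd_eq_add, smul_eq_mul, ← hc]
      have key : s * (1 - c) + c = (c + 2 * |c| + 1) / (2 * |c| + 2) := by
        rw [hs]; field_simp; ring
      rw [key]
      apply div_pos ?_ (by positivity)
      have := neg_abs_le c
      linarith
    · have hj := h j hji
      rw [(b.coord j).apply_lineMap, AffineMap.lineMap_apply, b.coord_apply, if_neg hji]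
      simp only [vsub_eq_sub, vadd_eq_add, smul_eq_mul]
      nlinarith

/-- For any nondegenerate triangle `p1p2p3` and any segment `qq'` meeting the open
interior of the triangle, some segment from an endpoint of `qq'` to a vertex of
the triangle also meets the interior of the triangle. -/
theorem triangleHide (p1 p2 p3 q q' : Pt)
    (hnd : ¬ Collinear ℝ ({p1, p2, p3} : Set Pt))
    (hgp : ∀ a b c, a ∈ ({p1, p2, p3, q, q'} : Set Pt) → b ∈ ({p1, p2, p3, q, q'} : Set Pt) →
      c ∈ ({p1, p2, p3, q, q'} : Set Pt) → a ≠ b → a ≠ c → b ≠ c →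
      ¬ Collinear ℝ ({a, b, c} : Set Pt))
    (hseg : (segment ℝ q q' ∩ interior (convexHull ℝ ({p1, p2, p3} : Set Pt))).Nonempty) :
    ∃ a ∈ ({q, q'} : Set Pt), ∃ b ∈ ({p1, p2, p3} : Set Pt),
      (segment ℝ a b ∩ interior (convexHull ℝ ({p1, p2, p3} : Set Pt))).Nonempty := by
  classical
  -- degenerate cases: an endpoint of the segment is a vertex
  by_cases hqv : q ∈ ({p1, p2, p3} : Set Pt)
  · exact ⟨q', by simp, q, hqv, by rwa [segment_symm]⟩
  by_cases hq'v : q' ∈ ({p1, p2, p3} : Set Pt)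
  · exact ⟨q, by simp, q', hq'v, hseg⟩
  -- set up the affine basis from the triangle
  have hta : AffineIndependent ℝ ![p1, p2, p3] := affineIndependent_iff_not_collinear_set.2 hnd
  have hcard : Fintype.card (Fin 3) = Module.finrank ℝ Pt + 1 := by simp
  have htop : affineSpan ℝ (Set.range ![p1, p2, p3]) = ⊤ :=
    hta.affineSpan_eq_top_iff_card_eq_finrank_add_one.2 hcard
  let b : AffineBasis (Fin 3) ℝ Pt := ⟨![p1, p2, p3], hta, htop⟩
  have hbpts : ∀ i : Fin 3, b i ∈ ({p1, p2, p3} : Set Pt) := by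
    intro i; fin_cases i
    exacts [Or.inl rfl, Or.inr (Or.inl rfl), Or.inr (Or.inr rfl)]
  have hsub : ({p1, p2, p3} : Set Pt) ⊆ ({p1, p2, p3, q, q'} : Set Pt) := by
    intro x hx; simp only [Set.mem_insert_iff, Set.mem_singleton_iff] at hx ⊢; tauto
  have hrange : Set.range b = ({p1, p2, p3} : Set Pt) := by
    ext x
    constructor
    · rintro ⟨i, rfl⟩; exact hbpts i
    · rintro (rfl | rfl | rfl)
      exacts [⟨0, rfl⟩, ⟨1, rfl⟩, ⟨2, rfl⟩]
  have hint : interior (convexHull ℝ ({p1, p2, p3} : Set Pt)) = {x | ∀ i, 0 < b.coord i x} := by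
    rw [← hrange]; exact b.interior_convexHull
  -- no endpoint has a vanishing barycentric coordinate
  have hne : ∀ r ∈ ({q, q'} : Set Pt), ∀ i : Fin 3, b.coord i r ≠ 0 := by
    rintro r hr i h0
    have hrv : r ∉ ({p1, p2, p3} : Set Pt) := by
      rcases hr with rfl | rfl
      exacts [hqv, by simpa using hq'v]
    have hrmem : r ∈ ({p1, p2, p3, q, q'} : Set Pt) := by
      rcases hr with rfl | rfl <;> simp_all
    have main : ∀ j k : Fin 3, j ≠ i → k ≠ i → j ≠ k → False := by
      intro j k hji hki hjk
      have hmem := mem_span_of_coord_zero b r i j k hji hki hjk h0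
      have hcol : Collinear ℝ ({r, b j, b k} : Set Pt) :=
        collinear_insert_of_mem_affineSpan_pair hmem
      have hne1 : r ≠ b j := fun h => hrv (h ▸ hbpts j)
      have hne2 : r ≠ b k := fun h => hrv (h ▸ hbpts k)
      have hne3 : b j ≠ b k := fun h => hjk (hta.injective h)
      exact hgp r (b j) (b k) hrmem (hsub (hbpts j)) (hsub (hbpts k)) hne1 hne2 hne3 hcol
    fin_cases i
    · exact main 1 2 (by decide) (by decide) (by decide)
    · exact main 0 2 (by decide) (by decide) (by decide)
    · exact main 0 1 (by decide) (by decide) (by decide)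
  -- extract the interior point on the segment
  obtain ⟨x, hxseg, hxint⟩ := hseg
  rw [segment_eq_image_lineMap] at hxseg
  obtain ⟨t, ht, rfl⟩ := hxseg
  rw [hint] at hxint
  have hpos : ∀ i : Fin 3, 0 < b.coord i q ∨ 0 < b.coord i q' := by
    intro i
    by_contra hcon
    push_neg at hcon
    obtain ⟨h1, h2⟩ := hcon
    have hq0 := (hne q (by simp) i).lt_of_le h1
    have hq'0 := (hne q' (by simp) i).lt_of_le h2
    have := hxint i
    rw [(b.coord i).apply_lineMap, AffineMap.lineMap_apply] at this
    simp only [vsub_eq_sub, vadd_eq_add, smul_eq_mul] at this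
    nlinarith [ht.1, ht.2]
  rcases tri_sign (fun i => b.coord i q) (fun i => b.coord i q') hpos with ⟨i, hi⟩ | ⟨i, hi⟩
  · obtain ⟨z, hz, hzpos⟩ := seg_to_vertex b q i hi
    exact ⟨q, by simp, b i, hbpts i, ⟨z, hz, by rw [hint]; exact hzpos⟩⟩
  · obtain ⟨z, hz, hzpos⟩ := seg_to_vertex b q' i hi
    exact ⟨q', by simp, b i, hbpts i, ⟨z, hz, by rw [hint]; exact hzpos⟩⟩
end
end

section
/- Let p1p2 and p3p4 be two crossing segments and l a line containing p1 and crossing the segment p3p4. Then at least one of the two pairs {p1p3, p2p4} or {p1p4, p2p3} has the property that neither segment of the pair crosses l. -/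
noncomputable section

lemma seg_key (u v fa fb c : ℝ) (huv : u + v = 1) (hfx : u * fa + v * fb = c) :
    u * (fa - c) + v * (fb - c) = 0 := by
  have hc : u * c + v * c = c := by rw [← add_mul, huv, one_mul]
  nlinarith [hc]

lemma not_lcross_of_eq (f : Pt →ₗ[ℝ] ℝ) (c : ℝ) (a b : Pt)
    (ha : f a = c) (hb : f b ≠ c) : ¬ LCross f c a b := by
  rintro ⟨x, hx, hfx, hxa, hxb, -⟩
  obtain ⟨u, v, hu, hv, huv, rfl⟩ := hx
  have hfv : f (u • a + v • b) = u * f a + v * f b := by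
    simp [map_add, map_smul]
  rw [hfv] at hfx
  have key := seg_key u v (f a) (f b) c huv hfx
  rw [ha, sub_self, mul_zero, zero_add] at key
  have hv0 : v = 0 := by
    rcases mul_eq_zero.mp key with h' | h'
    · exact h'
    · exact absurd (by linarith : f b = c) hb
  apply hxa
  have hu1 : u = 1 := by linarith
  simp [hv0, hu1]

lemma not_lcross_of_same_side (f : Pt →ₗ[ℝ] ℝ) (c : ℝ) (a b : Pt)
    (h : (f a - c) * (f b - c) > 0) : ¬ LCross f c a b := by
  rintro ⟨x, hx, hfx, -, -, -⟩
  obtain ⟨u, v, hu, hv, huv, rfl⟩ := hx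
  have hfv : f (u • a + v • b) = u * f a + v * f b := by
    simp [map_add, map_smul]
  rw [hfv] at hfx
  have key := seg_key u v (f a) (f b) c huv hfx
  rcases mul_pos_iff.mp h with ⟨h1, h2⟩ | ⟨h1, h2⟩
  · rcases eq_or_lt_of_le hu with h' | h'
    · have hv1 : v = 1 := by linarith
      rw [← h', hv1] at key; linarith
    · linarith [mul_pos h' h1, mul_nonneg hv h2.le]
  · rcases eq_or_lt_of_le hu with h' | h'
    · have hv1 : v = 1 := by linarith
      rw [← h', hv1] at key; linarith
    · linarith [mul_neg_of_pos_of_neg h' h1, mul_nonpos_of_nonneg_of_nonpos hv h2.le]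

lemma lcross_opp_side (f : Pt →ₗ[ℝ] ℝ) (c : ℝ) (a b : Pt)
    (ha : f a ≠ c) (hb : f b ≠ c) (h : LCross f c a b) :
    (f a - c) * (f b - c) < 0 := by
  obtain ⟨x, hx, hfx, hxa, hxb, -⟩ := h
  obtain ⟨u, v, hu, hv, huv, rfl⟩ := hx
  have hfv : f (u • a + v • b) = u * f a + v * f b := by
    simp [map_add, map_smul]
  rw [hfv] at hfx
  have hvpos : 0 < v := by
    rcases lt_or_eq_of_le hv with h' | h'
    · exact h'
    · exfalso; apply hxa
      have : u = 1 := by linarith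
      simp [← h', this]
  have hupos : 0 < u := by
    rcases lt_or_eq_of_le hu with h' | h'
    · exact h'
    · exfalso; apply hxb
      have : v = 1 := by linarith
      simp [← h', this]
  have key := seg_key u v (f a) (f b) c huv hfx
  have ha' : f a - c ≠ 0 := sub_ne_zero.mpr ha
  have hsq : (f a - c) ^ 2 > 0 := by positivity
  by_contra hcon
  push_neg at hcon
  have h1 := mul_nonneg hvpos.le hcon
  have keym : (f a - c) * (u * (f a - c) + v * (f b - c)) = 0 := by rw [key]; ring
  nlinarith [mul_pos hupos hsq, h1, keym]

/-- If `p1p2` and `p3p4` cross, and a line through `p1` crosses `p3p4`, then one of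
the two insertion choices `{p1p3, p2p4}` or `{p1p4, p2p3}` yields a pair where
neither segment crosses the line. -/
theorem insertion_choice_avoids_line (p1 p2 p3 p4 : Pt) (f : Pt →ₗ[ℝ] ℝ) (c : ℝ)
    (hf : f ≠ 0)
    (hgp : ∀ a b c', a ∈ ({p1, p2, p3, p4} : Set Pt) → b ∈ ({p1, p2, p3, p4} : Set Pt) →
      c' ∈ ({p1, p2, p3, p4} : Set Pt) → a ≠ b → a ≠ c' → b ≠ c' →
      ¬ Collinear ℝ ({a, b, c'} : Set Pt))
    (hp1 : f p1 = c) (hp2 : f p2 ≠ c) (hp3 : f p3 ≠ c) (hp4 : f p4 ≠ c)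
    (hcross : SegCross p1 p2 p3 p4)
    (hl : LCross f c p3 p4) :
    (¬ LCross f c p1 p3 ∧ ¬ LCross f c p2 p4) ∨
    (¬ LCross f c p1 p4 ∧ ¬ LCross f c p2 p3) := by
  have h34 : (f p3 - c) * (f p4 - c) < 0 := lcross_opp_side f c p3 p4 hp3 hp4 hl
  rcases lt_trichotomy ((f p2 - c) * (f p4 - c)) 0 with h24 | h24 | h24
  · right
    refine ⟨not_lcross_of_eq f c p1 p4 hp1 hp4, not_lcross_of_same_side f c p2 p3 ?_⟩
    have h4ne : f p4 - c ≠ 0 := sub_ne_zero.mpr hp4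
    have h4sq : (f p4 - c) ^ 2 > 0 := by positivity
    nlinarith [mul_pos_of_neg_of_neg h24 h34]
  · exfalso
    rcases mul_eq_zero.mp h24 with h' | h'
    · exact hp2 (by linarith [sub_eq_zero.mp h'])
    · exact hp4 (by linarith [sub_eq_zero.mp h'])
  · left
    exact ⟨not_lcross_of_eq f c p1 p3 hp1 hp3, not_lcross_of_same_side f c p2 p4 h24⟩
end
end

section
/- Let a < c < b < d be indices of points p_a, p_c, p_b, p_d in convex position (in this cyclic order along the convex hull) with depth of a segment p_i p_j defined as |i - j|. For the flip removing segments p_a p_b and p_c p_d, at least one of the two insertion choices {p_a p_c, p_b p_d} or {p_a p_d, p_c p_b} yields a pair whose product of depths is at most 3/4 of the product of depths of the removed pair. -/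
/-- For indices `a < c < b < d` of points in convex position, with depth
`D(i,j) = |i-j|`, one of the two insertion choices has product of depths at most
`3/4` of the product of depths of the removed pair. -/
theorem depth_product_insertion_choice (a c b d : ℕ)
    (h1 : a < c) (h2 : c < b) (h3 : b < d) :
    ((c : ℝ) - a) * ((d : ℝ) - b) ≤ 3 / 4 * (((b : ℝ) - a) * ((d : ℝ) - c)) ∨
    ((d : ℝ) - a) * ((b : ℝ) - c) ≤ 3 / 4 * (((b : ℝ) - a) * ((d : ℝ) - c)) := by
  have ha : (a : ℝ) < c := by exact_mod_cast h1
  have hb : (c : ℝ) < b := by exact_mod_cast h2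
  have hc : (b : ℝ) < d := by exact_mod_cast h3
  rcases le_total (((c : ℝ) - a) * ((d : ℝ) - b)) (((d : ℝ) - a) * ((b : ℝ) - c)) with h | h
  · left; nlinarith [mul_pos (sub_pos.2 ha) (sub_pos.2 hc), mul_pos (sub_pos.2 hb) (sub_pos.2 hb)]
  · right; nlinarith [mul_pos (sub_pos.2 ha) (sub_pos.2 hc), mul_pos (sub_pos.2 hb) (sub_pos.2 hb)]
end

section
/- Let P be 2n points in convex position and S a perfect matching on P by straight segments. If a segment p_a p_b of S (with endpoints indexed along the convex hull) has crossings, and among all segments of S with crossings it minimizes the crossing depth, then flipping it with the segment through the median witness point produces a segment whose crossing depth is at most half the crossing depth of p_a p_b. -/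
noncomputable section
open scoped Classical

/-- Orientation determinant of the triple `(a, b, c)`. -/
def ori (a b c : Pt) : ℝ := (b 0 - a 0) * (c 1 - a 1) - (b 1 - a 1) * (c 0 - a 0)

/-- The points `p 0, …, p (m-1)` are in convex position, sorted counterclockwise. -/
def CCWConvex (m : ℕ) (p : Fin m → Pt) : Prop :=
  ∀ i j k : Fin m, i < j → j < k → 0 < ori (p i) (p j) (p k)

/-- The segments indexed by `e` and `e'` cross. -/
def SegCrossP (m : ℕ) (p : Fin m → Pt) (e e' : Fin m × Fin m) : Prop :=
  SegCross (p e.1) (p e.2) (p e'.1) (p e'.2)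

/-- The segment `e` of `S` is involved in at least one crossing. -/
def HasCrossIn (m : ℕ) (p : Fin m → Pt) (S : Finset (Fin m × Fin m))
    (e : Fin m × Fin m) : Prop :=
  ∃ e' ∈ S, e' ≠ e ∧ SegCrossP m p e e'

/-- The crossing depth of the segment `e`: the number of indices `k` strictly
between the endpoint indices of `e` such that `p k` is an endpoint of a segment
of `S` involved in a crossing. -/
noncomputable def cDepth (m : ℕ) (p : Fin m → Pt) (S : Finset (Fin m × Fin m))
    (e : Fin m × Fin m) : ℕ :=
  {k : Fin m | e.1 < k ∧ k < e.2 ∧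
    ∃ e' ∈ S, (k = e'.1 ∨ k = e'.2) ∧ HasCrossIn m p S e'}.ncard

/-- Normalize an index pair so that the smaller index comes first. -/
def nrm (m : ℕ) (i j : Fin m) : Fin m × Fin m := if i ≤ j then (i, j) else (j, i)

/- ### Auxiliary geometric lemmas -/

lemma ori_aff (a b u v : Pt) (s t : ℝ) (h : s + t = 1) :
    ori a b (s • u + t • v) = s * ori a b u + t * ori a b v := by
  have hs : s = 1 - t := by linarith
  subst hs
  simp [ori, PiLp.add_apply, PiLp.smul_apply, smul_eq_mul]
  ring

lemma ori_self_left (a b : Pt) : ori a b a = 0 := by simp [ori]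

lemma ori_self_right (a b : Pt) : ori a b b = 0 := by simp [ori]; ring

lemma ori_swap23 (a b c : Pt) : ori a c b = - ori a b c := by simp [ori]; ring

lemma ori_cyc (a b c : Pt) : ori b c a = ori a b c := by simp [ori]; ring

lemma ori_zero_of_seg {a b x : Pt} (hx : x ∈ segment ℝ a b) : ori a b x = 0 := by
  obtain ⟨s, t, hs, ht, hst, rfl⟩ := hx
  rw [ori_aff a b a b s t hst, ori_self_left, ori_self_right]; ring

lemma not_segCross_of_sameSide {a b c d : Pt} (h : 0 < ori a b c * ori a b d) :
    ¬ SegCross a b c d := by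
  rintro ⟨x, hab, hcd, -⟩
  have h1 : ori a b x = 0 := ori_zero_of_seg (openSegment_subset_segment ℝ a b hab)
  obtain ⟨s, t, hs, ht, hst, rfl⟩ := hcd
  rw [ori_aff a b c d s t hst] at h1
  rcases mul_pos_iff.mp h with ⟨h2, h3⟩ | ⟨h2, h3⟩ <;> nlinarith

lemma segCross_symm {a b c d : Pt} (h : SegCross a b c d) : SegCross c d a b := by
  obtain ⟨x, h1, h2, h3⟩ := h
  exact ⟨x, h2, h1, fun y hy1 hy2 => h3 y hy2 hy1⟩

lemma eq_of_oris {a b c d : Pt} (hK : ori a b d - ori a b c ≠ 0)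
    {x y : Pt} (hfx : ori a b x = 0) (hgx : ori c d x = 0)
    (hfy : ori a b y = 0) (hgy : ori c d y = 0) : y = x := by
  have hK' : (b 0 - a 0) * (d 1 - c 1) - (b 1 - a 1) * (d 0 - c 0) ≠ 0 := by
    intro h; apply hK; simp only [ori]; linarith [h]
  have e1 : (b 0 - a 0) * (x 1 - y 1) - (b 1 - a 1) * (x 0 - y 0) = 0 := by
    simp only [ori] at hfx hfy; linarith [hfx, hfy]
  have e2 : (d 0 - c 0) * (x 1 - y 1) - (d 1 - c 1) * (x 0 - y 0) = 0 := by
    simp only [ori] at hgx hgy; linarith [hgx, hgy]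
  have hα : ((b 0 - a 0) * (d 1 - c 1) - (b 1 - a 1) * (d 0 - c 0)) * (x 0 - y 0) = 0 := by
    linear_combination (d 0 - c 0) * e1 - (b 0 - a 0) * e2
  have hβ : ((b 0 - a 0) * (d 1 - c 1) - (b 1 - a 1) * (d 0 - c 0)) * (x 1 - y 1) = 0 := by
    linear_combination (d 1 - c 1) * e1 - (b 1 - a 1) * e2
  have h0 : x 0 = y 0 := by
    rcases mul_eq_zero.mp hα with h | h
    · exact absurd h hK'
    · linarith
  have h1 : x 1 = y 1 := by
    rcases mul_eq_zero.mp hβ with h | h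
    · exact absurd h hK'
    · linarith
  ext i
  fin_cases i <;> simp [h0.symm, h1.symm]

lemma segCross_of_sides {a b c d : Pt}
    (hc : ori a b c < 0) (hd : 0 < ori a b d)
    (ha : 0 < ori c d a) (hb : ori c d b < 0) : SegCross a b c d := by
  have hK : ori a b d - ori a b c ≠ 0 := by linarith
  set t : ℝ := ori a b c / (ori a b c - ori a b d) with htdef
  have hden : ori a b c - ori a b d < 0 := by linarith
  have htm : t * (ori a b c - ori a b d) = ori a b c :=
    div_mul_cancel₀ _ hden.ne
  have ht0 : 0 < t := by nlinarith
  have ht1 : t < 1 := by nlinarith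
  set x : Pt := (1 - t) • c + t • d with hxdef
  have hfx : ori a b x = 0 := by
    rw [hxdef, ori_aff a b c d (1 - t) t (by ring)]; nlinarith
  have hgx : ori c d x = 0 := by
    rw [hxdef, ori_aff c d c d (1 - t) t (by ring), ori_self_left, ori_self_right]; ring
  set s : ℝ := ori c d a / (ori c d a - ori c d b) with hsdef
  have hden2 : 0 < ori c d a - ori c d b := by linarith
  have hsm : s * (ori c d a - ori c d b) = ori c d a :=
    div_mul_cancel₀ _ hden2.ne'
  have hs0 : 0 < s := by nlinarith
  have hs1 : s < 1 := by nlinarith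
  set y : Pt := (1 - s) • a + s • b with hydef
  have hgy : ori c d y = 0 := by
    rw [hydef, ori_aff c d a b (1 - s) s (by ring)]; nlinarith
  have hfy : ori a b y = 0 := by
    rw [hydef, ori_aff a b a b (1 - s) s (by ring), ori_self_left, ori_self_right]; ring
  have hyx : y = x := eq_of_oris hK hfx hgx hfy hgy
  refine ⟨x, ?_, ?_, ?_⟩
  · rw [← hyx]
    exact ⟨1 - s, s, by linarith, hs0, by ring, rfl⟩
  · exact ⟨1 - t, t, by linarith, ht0, by ring, rfl⟩
  · intro z hz1 hz2
    exact eq_of_oris hK hfx hgx (ori_zero_of_seg hz1) (ori_zero_of_seg hz2)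

/- ### Convex position: interleaving indices vs crossing -/

lemma cross_of_pattern {m : ℕ} {p : Fin m → Pt} (hconv : CCWConvex m p)
    {i j k l : Fin m} (h1 : i < k) (h2 : k < j) (h3 : j < l) :
    SegCross (p i) (p j) (p k) (p l) := by
  apply segCross_of_sides
  · rw [show ori (p i) (p j) (p k) = - ori (p i) (p k) (p j) from ori_swap23 _ _ _]
    linarith [hconv i k j h1 h2]
  · exact hconv i j l (h1.trans h2) h3
  · rw [show ori (p k) (p l) (p i) = ori (p i) (p k) (p l) from ori_cyc _ _ _]
    exact hconv i k l h1 (h2.trans h3)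
  · rw [show ori (p k) (p l) (p j) = - ori (p k) (p j) (p l) from ori_swap23 _ _ _]
    linarith [hconv k j l h2 h3]

lemma ori_pos_outside {m : ℕ} {p : Fin m → Pt} (hconv : CCWConvex m p)
    {i j w : Fin m} (hij : i < j) (h : w < i ∨ j < w) :
    0 < ori (p i) (p j) (p w) := by
  rcases h with h | h
  · rw [show ori (p i) (p j) (p w) = ori (p w) (p i) (p j) from (ori_cyc _ _ _).symm ▸ rfl]
    · exact (ori_cyc (p w) (p i) (p j) ▸ hconv w i j h hij)
  · exact hconv i j w hij h

lemma ori_neg_inside {m : ℕ} {p : Fin m → Pt} (hconv : CCWConvex m p)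
    {i j w : Fin m} (h1 : i < w) (h2 : w < j) :
    ori (p i) (p j) (p w) < 0 := by
  rw [show ori (p i) (p j) (p w) = - ori (p i) (p w) (p j) from ori_swap23 _ _ _]
  linarith [hconv i w j h1 h2]

lemma pattern_of_cross {m : ℕ} {p : Fin m → Pt} (hconv : CCWConvex m p)
    {i j k l : Fin m} (hij : i < j) (hkl : k < l)
    (hik : i ≠ k) (hil : i ≠ l) (hjk : j ≠ k) (hjl : j ≠ l)
    (h : SegCross (p i) (p j) (p k) (p l)) :
    (i < k ∧ k < j ∧ j < l) ∨ (k < i ∧ i < l ∧ l < j) := by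
  rcases lt_trichotomy k i with hk | hk | hk
  · rcases lt_trichotomy l i with hl | hl | hl
    · exact absurd h (not_segCross_of_sameSide
        (mul_pos (ori_pos_outside hconv hij (Or.inl hk))
          (ori_pos_outside hconv hij (Or.inl hl))))
    · exact absurd hl.symm hil
    · rcases lt_trichotomy l j with hl2 | hl2 | hl2
      · exact Or.inr ⟨hk, hl, hl2⟩
      · exact absurd hl2.symm hjl
      · exact absurd h (not_segCross_of_sameSide
          (mul_pos (ori_pos_outside hconv hij (Or.inl hk))
            (ori_pos_outside hconv hij (Or.inr hl2))))
  · exact absurd hk.symm hik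
  · rcases lt_trichotomy k j with hk2 | hk2 | hk2
    · rcases lt_trichotomy l j with hl | hl | hl
      · exact absurd h (not_segCross_of_sameSide
          (mul_pos_of_neg_of_neg (ori_neg_inside hconv hk hk2)
            (ori_neg_inside hconv (hk.trans hkl) hl)))
      · exact absurd hl.symm hjl
      · exact Or.inl ⟨hk, hk2, hl⟩
    · exact absurd hk2.symm hjk
    · exact absurd h (not_segCross_of_sameSide
        (mul_pos (ori_pos_outside hconv hij (Or.inr hk2))
          (ori_pos_outside hconv hij (Or.inr (hk2.trans hkl)))))

/-- Flipping a minimum-crossing-depth segment `p_a p_b` of a perfect matching on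
points in convex position with the segment through the median witness point `q`
produces a segment (the inserted segment incident to `q`) whose crossing depth in
the new configuration is at most half the crossing depth of `p_a p_b`. -/
theorem median_flip_halves_crossing_depth
    (m : ℕ) (p : Fin m → Pt) (hconv : CCWConvex m p)
    (S : Finset (Fin m × Fin m))
    (hmatch : ∀ i : Fin m, ∃! e, e ∈ S ∧ (i = e.1 ∨ i = e.2))
    (horder : ∀ e ∈ S, e.1 < e.2)
    (a b : Fin m) (hab : (a, b) ∈ S)
    (hcr : HasCrossIn m p S (a, b))
    (hmin : ∀ e ∈ S, HasCrossIn m p S e → cDepth m p S (a, b) ≤ cDepth m p S e)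
    (q : Fin m) (haq : a < q) (hqb : q < b)
    (hqwitness : ∃ e' ∈ S, (q = e'.1 ∨ q = e'.2) ∧ HasCrossIn m p S e')
    (hqmed : {k : Fin m | a < k ∧ k ≤ q ∧
        ∃ e' ∈ S, (k = e'.1 ∨ k = e'.2) ∧ HasCrossIn m p S e'}.ncard
      = (cDepth m p S (a, b) + 1) / 2)
    (e' : Fin m × Fin m) (he' : e' ∈ S) (he'ab : e' ≠ (a, b))
    (c : Fin m) (hc : (q = e'.1 ∧ c = e'.2) ∨ (q = e'.2 ∧ c = e'.1))
    (hcross : SegCrossP m p (a, b) e') :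
    (¬ SegCrossP m p (nrm m a q) (nrm m c b) →
      2 * cDepth m p
          (insert (nrm m a q) (insert (nrm m c b) ((S.erase (a, b)).erase e')))
          (nrm m a q)
        ≤ cDepth m p S (a, b)) ∧
    (¬ SegCrossP m p (nrm m b q) (nrm m c a) →
      2 * cDepth m p
          (insert (nrm m b q) (insert (nrm m c a) ((S.erase (a, b)).erase e')))
          (nrm m b q)
        ≤ cDepth m p S (a, b)) := by
  obtain ⟨e1, e2⟩ := e'
  have hab' : a < b := horder (a, b) hab
  have he'o : e1 < e2 := horder (e1, e2) he'
  have huniq : ∀ (i : Fin m) (e f : Fin m × Fin m), e ∈ S → (i = e.1 ∨ i = e.2) →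
      f ∈ S → (i = f.1 ∨ i = f.2) → e = f := by
    intro i e f he hie hf hif
    obtain ⟨g, -, hg⟩ := hmatch i
    rw [hg e ⟨he, hie⟩, hg f ⟨hf, hif⟩]
  have hqe' : q = e1 ∨ q = e2 := by
    rcases hc with ⟨h, -⟩ | ⟨h, -⟩
    · exact Or.inl h
    · exact Or.inr h
  have hce'2 : c = e1 ∨ c = e2 := by
    rcases hc with ⟨-, h⟩ | ⟨-, h⟩
    · exact Or.inr h
    · exact Or.inl h
  have hae1 : a ≠ e1 := fun h =>
    he'ab (huniq a (e1, e2) (a, b) he' (Or.inl h) hab (Or.inl rfl))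
  have hae2 : a ≠ e2 := fun h =>
    he'ab (huniq a (e1, e2) (a, b) he' (Or.inr h) hab (Or.inl rfl))
  have hbe1 : b ≠ e1 := fun h =>
    he'ab (huniq b (e1, e2) (a, b) he' (Or.inl h) hab (Or.inr rfl))
  have hbe2 : b ≠ e2 := fun h =>
    he'ab (huniq b (e1, e2) (a, b) he' (Or.inr h) hab (Or.inr rfl))
  have hcross' : SegCross (p a) (p b) (p e1) (p e2) := hcross
  have hkey : (q = e1 ∧ c = e2 ∧ b < c) ∨ (q = e2 ∧ c = e1 ∧ c < a) := by
    rcases pattern_of_cross hconv hab' he'o hae1 hae2 hbe1 hbe2 hcross' with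
      ⟨h1, h2, h3⟩ | ⟨h1, h2, h3⟩
    · rcases hc with ⟨hq1, hc1⟩ | ⟨hq1, hc1⟩
      · exact Or.inl ⟨hq1, hc1, by rw [hc1]; exact h3⟩
      · have hq2 : q = e2 := hq1
        rw [← hq2] at h3
        exact absurd h3 (lt_asymm hqb)
    · rcases hc with ⟨hq1, hc1⟩ | ⟨hq1, hc1⟩
      · have hq2 : q = e1 := hq1
        rw [← hq2] at h1
        exact absurd h1 (lt_asymm haq)
      · exact Or.inr ⟨hq1, hc1, by rw [hc1]; exact h1⟩
  have hend : ∀ g ∈ S, g ≠ (a, b) → g ≠ (e1, e2) →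
      (g.1 ≠ a ∧ g.1 ≠ b ∧ g.1 ≠ q ∧ g.1 ≠ c) ∧
      (g.2 ≠ a ∧ g.2 ≠ b ∧ g.2 ≠ q ∧ g.2 ≠ c) := by
    intro g hg hg1 hg2
    refine ⟨⟨fun h => hg1 ?_, fun h => hg1 ?_, fun h => hg2 ?_, fun h => hg2 ?_⟩,
            ⟨fun h => hg1 ?_, fun h => hg1 ?_, fun h => hg2 ?_, fun h => hg2 ?_⟩⟩
    · exact huniq a g (a, b) hg (Or.inl h.symm) hab (Or.inl rfl)
    · exact huniq b g (a, b) hg (Or.inl h.symm) hab (Or.inr rfl)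
    · exact huniq q g (e1, e2) hg (Or.inl h.symm) he' hqe'
    · exact huniq c g (e1, e2) hg (Or.inl h.symm) he' hce'2
    · exact huniq a g (a, b) hg (Or.inr h.symm) hab (Or.inl rfl)
    · exact huniq b g (a, b) hg (Or.inr h.symm) hab (Or.inr rfl)
    · exact huniq q g (e1, e2) hg (Or.inr h.symm) he' hqe'
    · exact huniq c g (e1, e2) hg (Or.inr h.symm) he' hce'2
  constructor
  · intro _hnc
    have hnaq : nrm m a q = (a, q) := by simp [nrm, haq.le]
    rw [hnaq]
    set T := insert ((a, q) : Fin m × Fin m)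
        (insert (nrm m c b) ((S.erase (a, b)).erase (e1, e2))) with hT
    have hTmem : ∀ g : Fin m × Fin m, g ∈ T ↔
        g = (a, q) ∨ g = nrm m c b ∨ (g ∈ S ∧ g ≠ (a, b) ∧ g ≠ (e1, e2)) := by
      intro g
      simp only [hT, Finset.mem_insert, Finset.mem_erase]
      constructor
      · rintro (h | h | ⟨h1, h2, h3⟩)
        · exact Or.inl h
        · exact Or.inr (Or.inl h)
        · exact Or.inr (Or.inr ⟨h3, h2, h1⟩)
      · rintro (h | h | ⟨h1, h2, h3⟩)
        · exact Or.inl h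
        · exact Or.inr (Or.inl h)
        · exact Or.inr (Or.inr ⟨h3, h2, h1⟩)
    have key1 : ∀ k : Fin m, a < k → k < q →
        (∃ g ∈ T, (k = g.1 ∨ k = g.2) ∧ HasCrossIn m p T g) →
        ∃ g ∈ S, (k = g.1 ∨ k = g.2) ∧ HasCrossIn m p S g := by
      rintro k hak hkq ⟨g, hgT, hkg, f, hfT, hfg, hcf⟩
      have hkb : k < b := hkq.trans hqb
      rcases (hTmem g).mp hgT with rfl | hg | ⟨hgS, hgab, hge⟩
      · rcases hkg with h | h
        · exact absurd (h ▸ hak) (lt_irrefl _)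
        · exact absurd (h ▸ hkq) (lt_irrefl _)
      · exfalso
        rcases hkey with ⟨hq1, hc1, hbc⟩ | ⟨hq1, hc1, hca⟩
        · have hncb : nrm m c b = (b, c) := by simp [nrm, hbc.not_ge]
          rw [hncb] at hg
          subst hg
          rcases hkg with h | h
          · exact absurd (h ▸ hkb) (lt_irrefl _)
          · exact absurd (h ▸ (hkb.trans hbc)) (lt_irrefl _)
        · have hncb : nrm m c b = (c, b) := by simp [nrm, (hca.trans hab').le]
          rw [hncb] at hg
          subst hg
          rcases hkg with h | h
          · exact absurd (h ▸ (hca.trans hak)) (lt_irrefl _)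
          · exact absurd (h ▸ hkb) (lt_irrefl _)
      · obtain ⟨u, v⟩ := g
        have huv : u < v := horder (u, v) hgS
        obtain ⟨⟨hua, hub, huq, huc⟩, hva, hvb, hvq, hvc⟩ := hend (u, v) hgS hgab hge
        rcases (hTmem f).mp hfT with rfl | hf | ⟨hfS, hfab, hfe⟩
        · -- f = (a, q)
          have hcf' : SegCross (p u) (p v) (p a) (p q) := hcf
          rcases pattern_of_cross hconv huv haq hua huq hva hvq hcf' with
            ⟨h1, h2, h3⟩ | ⟨h1, h2, h3⟩
          · exact ⟨(u, v), hgS, hkg, (a, b), hab, Ne.symm hgab,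
              cross_of_pattern hconv h1 h2 (h3.trans hqb)⟩
          · rcases lt_trichotomy v b with hvb' | hvb' | hvb'
            · rcases hkey with ⟨hq1, hc1, hbc⟩ | ⟨hq1, hc1, hca⟩
              · refine ⟨(u, v), hgS, hkg, (e1, e2), he', Ne.symm hge, ?_⟩
                have hx : SegCross (p u) (p v) (p q) (p c) :=
                  cross_of_pattern hconv h2 h3 (hvb'.trans hbc)
                rw [← hq1, ← hc1]
                exact hx
              · refine ⟨(u, v), hgS, hkg, (e1, e2), he', Ne.symm hge, ?_⟩
                have hx : SegCross (p c) (p q) (p u) (p v) :=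
                  cross_of_pattern hconv (hca.trans h1) h2 h3
                rw [← hq1, ← hc1]
                exact segCross_symm hx
            · exact absurd hvb' hvb
            · exact ⟨(u, v), hgS, hkg, (a, b), hab, Ne.symm hgab,
                segCross_symm (cross_of_pattern hconv h1 (h2.trans hqb) hvb')⟩
        · -- f = nrm c b
          rcases hkey with ⟨hq1, hc1, hbc⟩ | ⟨hq1, hc1, hca⟩
          · have hncb : nrm m c b = (b, c) := by simp [nrm, hbc.not_ge]
            rw [hncb] at hf
            subst hf
            have hcf' : SegCross (p u) (p v) (p b) (p c) := hcf
            rcases pattern_of_cross hconv huv hbc hub huc hvb hvc hcf' with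
              ⟨h1, h2, h3⟩ | ⟨h1, h2, h3⟩
            · rcases hkg with rfl | rfl
              · exact ⟨(k, v), hgS, Or.inl rfl, (a, b), hab, Ne.symm hgab,
                  segCross_symm (cross_of_pattern hconv hak h1 h2)⟩
              · exact absurd (hkb.trans h2) (lt_irrefl _)
            · rcases hkg with rfl | rfl
              · exact absurd (hkb.trans h1) (lt_irrefl _)
              · exact absurd (hkb.trans (h1.trans huv)) (lt_irrefl _)
          · have hncb : nrm m c b = (c, b) := by simp [nrm, (hca.trans hab').le]
            rw [hncb] at hf
            subst hf
            have hcf' : SegCross (p u) (p v) (p c) (p b) := hcf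
            rcases pattern_of_cross hconv huv (hca.trans hab') huc hub hvc hvb hcf' with
              ⟨h1, h2, h3⟩ | ⟨h1, h2, h3⟩
            · rcases hkg with rfl | rfl
              · exact absurd ((h1.trans hca).trans hak) (lt_irrefl _)
              · exact ⟨(u, k), hgS, Or.inr rfl, (a, b), hab, Ne.symm hgab,
                  cross_of_pattern hconv (h1.trans hca) hak h3⟩
            · rcases hkg with rfl | rfl
              · exact ⟨(k, v), hgS, Or.inl rfl, (a, b), hab, Ne.symm hgab,
                  segCross_symm (cross_of_pattern hconv hak h2 h3)⟩
              · exact absurd (hkb.trans h3) (lt_irrefl _)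
        · exact ⟨(u, v), hgS, hkg, f, hfS, hfg, hcf⟩
    have hsub : {k : Fin m | (a, q).1 < k ∧ k < (a, q).2 ∧
        ∃ g ∈ T, (k = g.1 ∨ k = g.2) ∧ HasCrossIn m p T g} ⊆
        ({k : Fin m | a < k ∧ k ≤ q ∧
          ∃ g ∈ S, (k = g.1 ∨ k = g.2) ∧ HasCrossIn m p S g} \ {q}) := by
      rintro k ⟨h1, h2, h3⟩
      exact ⟨⟨h1, le_of_lt h2, key1 k h1 h2 h3⟩, fun h => absurd (h ▸ h2) (lt_irrefl _)⟩
    have hqA : q ∈ {k : Fin m | a < k ∧ k ≤ q ∧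
        ∃ g ∈ S, (k = g.1 ∨ k = g.2) ∧ HasCrossIn m p S g} := ⟨haq, le_refl q, hqwitness⟩
    have hc1 : cDepth m p T (a, q) ≤
        ({k : Fin m | a < k ∧ k ≤ q ∧
          ∃ g ∈ S, (k = g.1 ∨ k = g.2) ∧ HasCrossIn m p S g} \ {q}).ncard :=
      Set.ncard_le_ncard hsub (Set.toFinite _)
    have hc2 : ({k : Fin m | a < k ∧ k ≤ q ∧
        ∃ g ∈ S, (k = g.1 ∨ k = g.2) ∧ HasCrossIn m p S g} \ {q}).ncard + 1 =
        ({k : Fin m | a < k ∧ k ≤ q ∧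
          ∃ g ∈ S, (k = g.1 ∨ k = g.2) ∧ HasCrossIn m p S g}).ncard :=
      Set.ncard_diff_singleton_add_one hqA (Set.toFinite _)
    omega
  · intro _hnc
    have hnbq : nrm m b q = (q, b) := by simp [nrm, hqb.not_ge]
    rw [hnbq]
    set T := insert ((q, b) : Fin m × Fin m)
        (insert (nrm m c a) ((S.erase (a, b)).erase (e1, e2))) with hT
    have hTmem : ∀ g : Fin m × Fin m, g ∈ T ↔
        g = (q, b) ∨ g = nrm m c a ∨ (g ∈ S ∧ g ≠ (a, b) ∧ g ≠ (e1, e2)) := by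
      intro g
      simp only [hT, Finset.mem_insert, Finset.mem_erase]
      constructor
      · rintro (h | h | ⟨h1, h2, h3⟩)
        · exact Or.inl h
        · exact Or.inr (Or.inl h)
        · exact Or.inr (Or.inr ⟨h3, h2, h1⟩)
      · rintro (h | h | ⟨h1, h2, h3⟩)
        · exact Or.inl h
        · exact Or.inr (Or.inl h)
        · exact Or.inr (Or.inr ⟨h3, h2, h1⟩)
    have key2 : ∀ k : Fin m, q < k → k < b →
        (∃ g ∈ T, (k = g.1 ∨ k = g.2) ∧ HasCrossIn m p T g) →
        ∃ g ∈ S, (k = g.1 ∨ k = g.2) ∧ HasCrossIn m p S g := by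
      rintro k hqk hkb ⟨g, hgT, hkg, f, hfT, hfg, hcf⟩
      have hak : a < k := haq.trans hqk
      rcases (hTmem g).mp hgT with rfl | hg | ⟨hgS, hgab, hge⟩
      · rcases hkg with h | h
        · exact absurd (h ▸ hqk) (lt_irrefl _)
        · exact absurd (h ▸ hkb) (lt_irrefl _)
      · exfalso
        rcases hkey with ⟨hq1, hc1, hbc⟩ | ⟨hq1, hc1, hca⟩
        · have hnca : nrm m c a = (a, c) := by simp [nrm, (hab'.trans hbc).not_ge]
          rw [hnca] at hg
          subst hg
          rcases hkg with h | h
          · exact absurd (h ▸ hak) (lt_irrefl _)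
          · exact absurd (h ▸ (hkb.trans hbc)) (lt_irrefl _)
        · have hnca : nrm m c a = (c, a) := by simp [nrm, hca.le]
          rw [hnca] at hg
          subst hg
          rcases hkg with h | h
          · exact absurd (h ▸ (hca.trans hak)) (lt_irrefl _)
          · exact absurd (h ▸ hak) (lt_irrefl _)
      · obtain ⟨u, v⟩ := g
        have huv : u < v := horder (u, v) hgS
        obtain ⟨⟨hua, hub, huq, huc⟩, hva, hvb, hvq, hvc⟩ := hend (u, v) hgS hgab hge
        rcases (hTmem f).mp hfT with rfl | hf | ⟨hfS, hfab, hfe⟩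
        · -- f = (q, b)
          have hcf' : SegCross (p u) (p v) (p q) (p b) := hcf
          rcases pattern_of_cross hconv huv hqb huq hub hvq hvb hcf' with
            ⟨h1, h2, h3⟩ | ⟨h1, h2, h3⟩
          · rcases hkg with rfl | rfl
            · exact absurd (hqk.trans h1) (lt_irrefl _)
            · rcases lt_trichotomy u a with hu | hu | hu
              · exact ⟨(u, k), hgS, Or.inr rfl, (a, b), hab, Ne.symm hgab,
                  cross_of_pattern hconv hu hak h3⟩
              · exact absurd hu hua
              · rcases hkey with ⟨hq1, hc1, hbc⟩ | ⟨hq1, hc1, hca⟩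
                · refine ⟨(u, k), hgS, Or.inr rfl, (e1, e2), he', Ne.symm hge, ?_⟩
                  have hx : SegCross (p u) (p k) (p q) (p c) :=
                    cross_of_pattern hconv h1 h2 (h3.trans hbc)
                  rw [← hq1, ← hc1]
                  exact hx
                · refine ⟨(u, k), hgS, Or.inr rfl, (e1, e2), he', Ne.symm hge, ?_⟩
                  have hx : SegCross (p c) (p q) (p u) (p k) :=
                    cross_of_pattern hconv (hca.trans hu) h1 h2
                  rw [← hq1, ← hc1]
                  exact segCross_symm hx
          · rcases hkg with rfl | rfl
            · exact ⟨(k, v), hgS, Or.inl rfl, (a, b), hab, Ne.symm hgab,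
                segCross_symm (cross_of_pattern hconv hak h2 h3)⟩
            · exact absurd (hkb.trans h3) (lt_irrefl _)
        · -- f = nrm c a
          rcases hkey with ⟨hq1, hc1, hbc⟩ | ⟨hq1, hc1, hca⟩
          · have hnca : nrm m c a = (a, c) := by simp [nrm, (hab'.trans hbc).not_ge]
            rw [hnca] at hf
            subst hf
            have hcf' : SegCross (p u) (p v) (p a) (p c) := hcf
            rcases pattern_of_cross hconv huv (hab'.trans hbc) hua huc hva hvc hcf' with
              ⟨h1, h2, h3⟩ | ⟨h1, h2, h3⟩
            · rcases hkg with rfl | rfl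
              · exact absurd (hak.trans h1) (lt_irrefl _)
              · exact ⟨(u, k), hgS, Or.inr rfl, (a, b), hab, Ne.symm hgab,
                  cross_of_pattern hconv h1 hak hkb⟩
            · rcases hkg with rfl | rfl
              · exact ⟨(k, v), hgS, Or.inl rfl, (a, b), hab, Ne.symm hgab,
                  segCross_symm (cross_of_pattern hconv h1 hkb (hbc.trans h3))⟩
              · exact absurd (hkb.trans (hbc.trans h3)) (lt_irrefl _)
          · have hnca : nrm m c a = (c, a) := by simp [nrm, hca.le]
            rw [hnca] at hf
            subst hf
            have hcf' : SegCross (p u) (p v) (p c) (p a) := hcf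
            rcases pattern_of_cross hconv huv hca huc hua hvc hva hcf' with
              ⟨h1, h2, h3⟩ | ⟨h1, h2, h3⟩
            · rcases hkg with rfl | rfl
              · exact absurd ((h1.trans (h2.trans h3)).trans hak) (lt_irrefl _)
              · exact absurd (h3.trans hak) (lt_irrefl _)
            · rcases hkg with rfl | rfl
              · exact absurd (h2.trans hak) (lt_irrefl _)
              · exact ⟨(u, k), hgS, Or.inr rfl, (a, b), hab, Ne.symm hgab,
                  cross_of_pattern hconv h2 hak hkb⟩
        · exact ⟨(u, v), hgS, hkg, f, hfS, hfg, hcf⟩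
    have hsub : {k : Fin m | (q, b).1 < k ∧ k < (q, b).2 ∧
        ∃ g ∈ T, (k = g.1 ∨ k = g.2) ∧ HasCrossIn m p T g} ⊆
        {k : Fin m | q < k ∧ k < b ∧
          ∃ g ∈ S, (k = g.1 ∨ k = g.2) ∧ HasCrossIn m p S g} := by
      rintro k ⟨h1, h2, h3⟩
      exact ⟨h1, h2, key2 k h1 h2 h3⟩
    have hc1 : cDepth m p T (q, b) ≤
        ({k : Fin m | q < k ∧ k < b ∧
          ∃ g ∈ S, (k = g.1 ∨ k = g.2) ∧ HasCrossIn m p S g}).ncard :=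
      Set.ncard_le_ncard hsub (Set.toFinite _)
    have hunion : {k : Fin m | a < k ∧ k ≤ q ∧
          ∃ g ∈ S, (k = g.1 ∨ k = g.2) ∧ HasCrossIn m p S g} ∪
        {k : Fin m | q < k ∧ k < b ∧
          ∃ g ∈ S, (k = g.1 ∨ k = g.2) ∧ HasCrossIn m p S g} =
        {k : Fin m | a < k ∧ k < b ∧
          ∃ g ∈ S, (k = g.1 ∨ k = g.2) ∧ HasCrossIn m p S g} := by
      ext k
      simp only [Set.mem_union, Set.mem_setOf_eq]
      constructor
      · rintro (⟨h1, h2, h3⟩ | ⟨h1, h2, h3⟩)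
        · exact ⟨h1, lt_of_le_of_lt h2 hqb, h3⟩
        · exact ⟨haq.trans h1, h2, h3⟩
      · rintro ⟨h1, h2, h3⟩
        rcases le_or_gt k q with h | h
        · exact Or.inl ⟨h1, h, h3⟩
        · exact Or.inr ⟨h, h2, h3⟩
    have hdisj : Disjoint {k : Fin m | a < k ∧ k ≤ q ∧
          ∃ g ∈ S, (k = g.1 ∨ k = g.2) ∧ HasCrossIn m p S g}
        {k : Fin m | q < k ∧ k < b ∧
          ∃ g ∈ S, (k = g.1 ∨ k = g.2) ∧ HasCrossIn m p S g} := by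
      rw [Set.disjoint_left]
      rintro k ⟨-, h2, -⟩ ⟨h4, -, -⟩
      exact absurd h4 (not_lt.mpr h2)
    have hcard : ({k : Fin m | a < k ∧ k ≤ q ∧
          ∃ g ∈ S, (k = g.1 ∨ k = g.2) ∧ HasCrossIn m p S g}).ncard +
        ({k : Fin m | q < k ∧ k < b ∧
          ∃ g ∈ S, (k = g.1 ∨ k = g.2) ∧ HasCrossIn m p S g}).ncard =
        ({k : Fin m | a < k ∧ k < b ∧
          ∃ g ∈ S, (k = g.1 ∨ k = g.2) ∧ HasCrossIn m p S g}).ncard := by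
      rw [← hunion]
      exact (Set.ncard_union_eq hdisj (Set.toFinite _) (Set.toFinite _)).symm
    have hW : ({k : Fin m | a < k ∧ k < b ∧
        ∃ g ∈ S, (k = g.1 ∨ k = g.2) ∧ HasCrossIn m p S g}).ncard =
        cDepth m p S (a, b) := rfl
    omega
end
end

section
/- Let the potential Phi_T(S) be the sum over all segments p_i p_j of S having at least one endpoint in T of |i - j|, where points are sorted by decreasing y-coordinate, T1 lies above line l1, the convex set C between l1 and l2, and T2 below l2. Then any flip involving at least one endpoint in T = T1 ∪ T2 strictly decreases Phi_T(S), and flips involving only points of C leave Phi_T(S) unchanged, where the insertion choice for flips involving T inserts the pair {p_a p_b, p_c p_d} when the four flipped points in vertical order are p_a, p_b, p_c, p_d with a<b<c<d. -/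
noncomputable section

def ConvexPos (P : Set Pt) : Prop := ∀ p ∈ P, p ∉ convexHull ℝ (P \ {p})

/-- Index distance `|i - j|` of a segment given by an index pair. -/
def idist {N : ℕ} (e : Fin N × Fin N) : ℕ :=
  max e.1.val e.2.val - min e.1.val e.2.val

/-- The potential `Φ_T(S)`: sum of `|i - j|` over all segments of `S` with at
least one endpoint (index) in `T`. -/
def PhiT {N : ℕ} (T : Finset (Fin N)) (S : Multiset (Fin N × Fin N)) : ℕ :=
  ((S.filter (fun e => e.1 ∈ T ∨ e.2 ∈ T)).map idist).sum

/-! ### Auxiliary multiset permutation lemmas -/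

lemma ms_swap2 {α : Type*} (q x : α) : (q ::ₘ {x} : Multiset α) = x ::ₘ {q} :=
  Multiset.cons_swap q x 0

lemma ms_rot3' {α : Type*} (p q x : α) (s : Multiset α) :
    p ::ₘ q ::ₘ x ::ₘ s = x ::ₘ p ::ₘ q ::ₘ s := by
  rw [Multiset.cons_swap q x s, Multiset.cons_swap p x (q ::ₘ s)]

lemma ms_last3 {α : Type*} (p q x : α) : (p ::ₘ q ::ₘ {x} : Multiset α) = x ::ₘ p ::ₘ {q} := by
  rw [ms_swap2 q x, Multiset.cons_swap p x {q}]

lemma ms_last4 {α : Type*} (p q r x : α) :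
    (p ::ₘ q ::ₘ r ::ₘ {x} : Multiset α) = x ::ₘ p ::ₘ q ::ₘ {r} := by
  rw [ms_swap2 r x, ms_rot3' p q x {r}]

lemma ms_pair {α : Type*} {y z p q : α} (h : ({y, z} : Multiset α) = {p, q}) :
    (y = p ∧ z = q) ∨ (y = q ∧ z = p) := by
  have hy : y = p ∨ y = q := by
    have : y ∈ ({p, q} : Multiset α) := by rw [← h]; simp
    simpa using this
  simp only [Multiset.insert_eq_cons] at h
  rcases hy with rfl | rfl
  · left
    refine ⟨rfl, ?_⟩
    rw [Multiset.cons_inj_right] at h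
    simpa using h
  · right
    refine ⟨rfl, ?_⟩
    rw [ms_swap2 p y, Multiset.cons_inj_right] at h
    simpa using h

lemma ms_three {α : Type*} {x y z p q r : α} (h : ({x, y, z} : Multiset α) = {p, q, r}) :
    (x = p ∧ ((y = q ∧ z = r) ∨ (y = r ∧ z = q))) ∨
    (x = q ∧ ((y = p ∧ z = r) ∨ (y = r ∧ z = p))) ∨
    (x = r ∧ ((y = p ∧ z = q) ∨ (y = q ∧ z = p))) := by
  have hx : x = p ∨ x = q ∨ x = r := by
    have : x ∈ ({p, q, r} : Multiset α) := by rw [← h]; simp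
    simpa using this
  simp only [Multiset.insert_eq_cons] at h
  rcases hx with rfl | rfl | rfl
  · rw [Multiset.cons_inj_right] at h
    exact Or.inl ⟨rfl, ms_pair h⟩
  · rw [Multiset.cons_swap p x {r}, Multiset.cons_inj_right] at h
    exact Or.inr (Or.inl ⟨rfl, ms_pair h⟩)
  · rw [ms_last3 p q x, Multiset.cons_inj_right] at h
    exact Or.inr (Or.inr ⟨rfl, ms_pair h⟩)

lemma perm4 {α : Type*} {w x y z a b c d : α}
    (h : ({w, x, y, z} : Multiset α) = {a, b, c, d}) :
    (((w = a ∧ x = b) ∨ (w = b ∧ x = a)) ∧ ((y = c ∧ z = d) ∨ (y = d ∧ z = c))) ∨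
    (((w = c ∧ x = d) ∨ (w = d ∧ x = c)) ∧ ((y = a ∧ z = b) ∨ (y = b ∧ z = a))) ∨
    (((w = a ∧ x = c) ∨ (w = c ∧ x = a)) ∧ ((y = b ∧ z = d) ∨ (y = d ∧ z = b))) ∨
    (((w = b ∧ x = d) ∨ (w = d ∧ x = b)) ∧ ((y = a ∧ z = c) ∨ (y = c ∧ z = a))) ∨
    (((w = a ∧ x = d) ∨ (w = d ∧ x = a)) ∧ ((y = b ∧ z = c) ∨ (y = c ∧ z = b))) ∨
    (((w = b ∧ x = c) ∨ (w = c ∧ x = b)) ∧ ((y = a ∧ z = d) ∨ (y = d ∧ z = a))) := by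
  have hw : w = a ∨ w = b ∨ w = c ∨ w = d := by
    have : w ∈ ({a, b, c, d} : Multiset α) := by rw [← h]; simp
    simpa using this
  simp only [Multiset.insert_eq_cons] at h
  rcases hw with rfl | rfl | rfl | rfl
  · rw [Multiset.cons_inj_right] at h
    rcases ms_three h with ⟨rfl, hp⟩ | ⟨rfl, hp⟩ | ⟨rfl, hp⟩
    · exact Or.inl ⟨Or.inl ⟨rfl, rfl⟩, hp⟩
    · exact Or.inr (Or.inr (Or.inl ⟨Or.inl ⟨rfl, rfl⟩, hp⟩))
    · exact Or.inr (Or.inr (Or.inr (Or.inr (Or.inl ⟨Or.inl ⟨rfl, rfl⟩, hp⟩))))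
  · rw [Multiset.cons_swap a w (c ::ₘ {d}), Multiset.cons_inj_right] at h
    rcases ms_three h with ⟨rfl, hp⟩ | ⟨rfl, hp⟩ | ⟨rfl, hp⟩
    · exact Or.inl ⟨Or.inr ⟨rfl, rfl⟩, hp⟩
    · exact Or.inr (Or.inr (Or.inr (Or.inr (Or.inr ⟨Or.inl ⟨rfl, rfl⟩, hp⟩))))
    · exact Or.inr (Or.inr (Or.inr (Or.inl ⟨Or.inl ⟨rfl, rfl⟩, hp⟩)))
  · rw [ms_rot3' a b w {d}, Multiset.cons_inj_right] at h
    rcases ms_three h with ⟨rfl, hp⟩ | ⟨rfl, hp⟩ | ⟨rfl, hp⟩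
    · exact Or.inr (Or.inr (Or.inl ⟨Or.inr ⟨rfl, rfl⟩, hp⟩))
    · exact Or.inr (Or.inr (Or.inr (Or.inr (Or.inr ⟨Or.inr ⟨rfl, rfl⟩, hp⟩))))
    · exact Or.inr (Or.inl ⟨Or.inl ⟨rfl, rfl⟩, hp⟩)
  · rw [ms_last4 a b c w, Multiset.cons_inj_right] at h
    rcases ms_three h with ⟨rfl, hp⟩ | ⟨rfl, hp⟩ | ⟨rfl, hp⟩
    · exact Or.inr (Or.inr (Or.inr (Or.inr (Or.inl ⟨Or.inr ⟨rfl, rfl⟩, hp⟩))))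
    · exact Or.inr (Or.inr (Or.inr (Or.inl ⟨Or.inr ⟨rfl, rfl⟩, hp⟩)))
    · exact Or.inr (Or.inl ⟨Or.inr ⟨rfl, rfl⟩, hp⟩)

/-! ### Geometric separation lemmas -/

lemma segY_le (u v x : Pt) (hx : x ∈ segment ℝ u v) : x 1 ≤ max (u 1) (v 1) := by
  obtain ⟨t, s, ht, hs, hts, rfl⟩ := hx
  have h1 : (t • u + s • v) 1 = t * u 1 + s * v 1 := rfl
  have h2 : t * u 1 ≤ t * max (u 1) (v 1) :=
    mul_le_mul_of_nonneg_left (le_max_left _ _) ht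
  have h3 : s * v 1 ≤ s * max (u 1) (v 1) :=
    mul_le_mul_of_nonneg_left (le_max_right _ _) hs
  have h4 : t * max (u 1) (v 1) + s * max (u 1) (v 1) = max (u 1) (v 1) := by
    rw [← add_mul, hts, one_mul]
  rw [h1]; linarith

lemma segY_ge (u v x : Pt) (hx : x ∈ segment ℝ u v) : min (u 1) (v 1) ≤ x 1 := by
  obtain ⟨t, s, ht, hs, hts, rfl⟩ := hx
  have h1 : (t • u + s • v) 1 = t * u 1 + s * v 1 := rfl
  have h2 : t * min (u 1) (v 1) ≤ t * u 1 :=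
    mul_le_mul_of_nonneg_left (min_le_left _ _) ht
  have h3 : s * min (u 1) (v 1) ≤ s * v 1 :=
    mul_le_mul_of_nonneg_left (min_le_right _ _) hs
  have h4 : t * min (u 1) (v 1) + s * min (u 1) (v 1) = min (u 1) (v 1) := by
    rw [← add_mul, hts, one_mul]
  rw [h1]; linarith

lemma segCross_symm_s14 {p q u v : Pt} (h : SegCross p q u v) : SegCross u v p q := by
  obtain ⟨x, h1, h2, h3⟩ := h
  exact ⟨x, h2, h1, fun y hy hy' => h3 y hy' hy⟩

lemma seg_sep {p q u v : Pt} (hlt : max (u 1) (v 1) < min (p 1) (q 1)) :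
    ¬ SegCross p q u v := by
  rintro ⟨x, hx1, hx2, -⟩
  have h1 := segY_ge p q x (openSegment_subset_segment ℝ p q hx1)
  have h2 := segY_le u v x (openSegment_subset_segment ℝ u v hx2)
  linarith

/-! ### Potential bookkeeping -/

lemma PhiT_cons {N : ℕ} (T : Finset (Fin N)) (e : Fin N × Fin N)
    (s : Multiset (Fin N × Fin N)) :
    PhiT T (e ::ₘ s) = (if e.1 ∈ T ∨ e.2 ∈ T then idist e else 0) + PhiT T s := by
  by_cases h : e.1 ∈ T ∨ e.2 ∈ T <;> simp [PhiT, Multiset.filter_cons, h]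

lemma PhiT_cons' {N : ℕ} (T : Finset (Fin N)) (i j : Fin N)
    (s : Multiset (Fin N × Fin N)) :
    PhiT T ((i, j) ::ₘ s) = (if i ∈ T ∨ j ∈ T then idist (i, j) else 0) + PhiT T s :=
  PhiT_cons T (i, j) s

lemma contrib_pair {N : ℕ} (T : Finset (Fin N)) (e : Fin N × Fin N) (p q : Fin N)
    (h : (e.1 = p ∧ e.2 = q) ∨ (e.1 = q ∧ e.2 = p)) :
    (if e.1 ∈ T ∨ e.2 ∈ T then idist e else 0)
      = if p ∈ T ∨ q ∈ T then idist (p, q) else 0 := by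
  obtain ⟨h1, h2⟩ | ⟨h1, h2⟩ := h
  · rw [← h1, ← h2]
  · rw [← h1, ← h2]
    simp [idist, Nat.max_comm, Nat.min_comm, or_comm]

lemma ineqA {N : ℕ} (T1 T2 : Finset (Fin N)) (a b c d : Fin N)
    (hab' : a.val < b.val) (hbc' : b.val < c.val) (hcd' : c.val < d.val)
    (himp1 : b ∈ T1 ∪ T2 → a ∈ T1 ∪ T2 ∨ (c ∈ T1 ∪ T2 ∧ d ∈ T1 ∪ T2))
    (himp2 : c ∈ T1 ∪ T2 → d ∈ T1 ∪ T2 ∨ (a ∈ T1 ∪ T2 ∧ b ∈ T1 ∪ T2))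
    (hne : a ∈ T1 ∪ T2 ∨ b ∈ T1 ∪ T2 ∨ c ∈ T1 ∪ T2 ∨ d ∈ T1 ∪ T2) :
    (if a ∈ T1 ∪ T2 ∨ b ∈ T1 ∪ T2 then idist (a, b) else 0) +
        (if c ∈ T1 ∪ T2 ∨ d ∈ T1 ∪ T2 then idist (c, d) else 0) <
        (if a ∈ T1 ∪ T2 ∨ c ∈ T1 ∪ T2 then idist (a, c) else 0) +
        (if b ∈ T1 ∪ T2 ∨ d ∈ T1 ∪ T2 then idist (b, d) else 0) := by
  simp only [Finset.mem_union] at himp1 himp2 hne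
  simp [idist]
  split_ifs <;> first | omega | itauto

lemma ineqB {N : ℕ} (T1 T2 : Finset (Fin N)) (a b c d : Fin N)
    (hab' : a.val < b.val) (hbc' : b.val < c.val) (hcd' : c.val < d.val)
    (himp1 : b ∈ T1 ∪ T2 → a ∈ T1 ∪ T2 ∨ (c ∈ T1 ∪ T2 ∧ d ∈ T1 ∪ T2))
    (himp2 : c ∈ T1 ∪ T2 → d ∈ T1 ∪ T2 ∨ (a ∈ T1 ∪ T2 ∧ b ∈ T1 ∪ T2))
    (hne : a ∈ T1 ∪ T2 ∨ b ∈ T1 ∪ T2 ∨ c ∈ T1 ∪ T2 ∨ d ∈ T1 ∪ T2) :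
    (if a ∈ T1 ∪ T2 ∨ b ∈ T1 ∪ T2 then idist (a, b) else 0) +
        (if c ∈ T1 ∪ T2 ∨ d ∈ T1 ∪ T2 then idist (c, d) else 0) <
        (if a ∈ T1 ∪ T2 ∨ d ∈ T1 ∪ T2 then idist (a, d) else 0) +
        (if b ∈ T1 ∪ T2 ∨ c ∈ T1 ∪ T2 then idist (b, c) else 0) := by
  simp only [Finset.mem_union] at himp1 himp2 hne
  simp [idist]
  split_ifs <;> first | omega | itauto

set_option maxHeartbeats 4000000

/-- With points indexed by decreasing `y`-coordinate, `C` in convex position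
between two horizontal lines, `T1` above and `T2` below: a flip on four points
`a < b < c < d` (in vertical order) involving a point of `T = T1 ∪ T2`, with the
insertion choice `{p_a p_b, p_c p_d}`, strictly decreases `Φ_T`, while a flip
involving only points of `C` leaves `Φ_T` unchanged. -/
theorem phi_potential_behaviour (N : ℕ) (P : Fin N → Pt)
    (hdec : ∀ i j : Fin N, i < j → P j 1 < P i 1)
    (C T1 T2 : Finset (Fin N))
    (hpart : ∀ i : Fin N, i ∈ C ∨ i ∈ T1 ∨ i ∈ T2)
    (hd1 : Disjoint C T1) (hd2 : Disjoint C T2) (hd3 : Disjoint T1 T2)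
    (y1 y2 : ℝ) (hy : y2 < y1)
    (hT1 : ∀ i ∈ T1, y1 < P i 1)
    (hC : ∀ i ∈ C, y2 < P i 1 ∧ P i 1 < y1)
    (hT2 : ∀ i ∈ T2, P i 1 < y2)
    (hconv : ConvexPos (P '' (C : Set (Fin N))))
    (S S' : Multiset (Fin N × Fin N))
    (e1 e2 f1 f2 : Fin N × Fin N)
    (a b c d : Fin N) (hab : a < b) (hbc : b < c) (hcd : c < d)
    (he1 : e1 ∈ S) (he2 : e2 ∈ S.erase e1)
    (hcross : SegCross (P e1.1) (P e1.2) (P e2.1) (P e2.2))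
    (hnocross : ¬ SegCross (P f1.1) (P f1.2) (P f2.1) (P f2.2))
    (hends : ({e1.1, e1.2, e2.1, e2.2} : Multiset (Fin N)) = ({a, b, c, d} : Multiset (Fin N)))
    (hends' : ({f1.1, f1.2, f2.1, f2.2} : Multiset (Fin N)) = ({a, b, c, d} : Multiset (Fin N)))
    (hS' : S' = f1 ::ₘ f2 ::ₘ ((S.erase e1).erase e2)) :
    ((a ∈ T1 ∪ T2 ∨ b ∈ T1 ∪ T2 ∨ c ∈ T1 ∪ T2 ∨ d ∈ T1 ∪ T2) →
      f1 = (a, b) → f2 = (c, d) →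
      PhiT (T1 ∪ T2) S' < PhiT (T1 ∪ T2) S) ∧
    ((a ∈ C ∧ b ∈ C ∧ c ∈ C ∧ d ∈ C) →
      PhiT (T1 ∪ T2) S' = PhiT (T1 ∪ T2) S) := by
  have hac : a < c := hab.trans hbc
  have had : a < d := hac.trans hcd
  have hbd : b < d := hbc.trans hcd
  have hab' : a.val < b.val := hab
  have hbc' : b.val < c.val := hbc
  have hcd' : c.val < d.val := hcd
  have hSdec : S = e1 ::ₘ e2 ::ₘ ((S.erase e1).erase e2) := by
    rw [Multiset.cons_erase he2, Multiset.cons_erase he1]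
  have hPS : PhiT (T1 ∪ T2) S = (if e1.1 ∈ T1 ∪ T2 ∨ e1.2 ∈ T1 ∪ T2 then idist e1 else 0) +
      ((if e2.1 ∈ T1 ∪ T2 ∨ e2.2 ∈ T1 ∪ T2 then idist e2 else 0) +
        PhiT (T1 ∪ T2) ((S.erase e1).erase e2)) := by
    conv_lhs => rw [hSdec]
    rw [PhiT_cons, PhiT_cons]
  constructor
  · intro hne hf1 hf2
    subst hf1 hf2 hS'
    -- monotonicity of the strips
    have mono1 : ∀ i j : Fin N, i < j → j ∈ T1 → i ∈ T1 := by
      intro i j hij hj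
      have h1 := hT1 j hj
      have h2 := hdec i j hij
      rcases hpart i with h | h | h
      · exact absurd (hC i h).2 (by linarith)
      · exact h
      · exact absurd (hT2 i h) (by linarith)
    have mono2 : ∀ i j : Fin N, i < j → i ∈ T2 → j ∈ T2 := by
      intro i j hij hi
      have h1 := hT2 i hi
      have h2 := hdec i j hij
      rcases hpart j with h | h | h
      · exact absurd (hC j h).1 (by linarith)
      · exact absurd (hT1 j h) (by linarith)
      · exact h
    have himp1 : b ∈ T1 ∪ T2 → a ∈ T1 ∪ T2 ∨ (c ∈ T1 ∪ T2 ∧ d ∈ T1 ∪ T2) := by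
      intro hb
      rcases Finset.mem_union.1 hb with h | h
      · exact Or.inl (Finset.mem_union_left _ (mono1 a b hab h))
      · exact Or.inr ⟨Finset.mem_union_right _ (mono2 b c hbc h),
          Finset.mem_union_right _ (mono2 b d hbd h)⟩
    have himp2 : c ∈ T1 ∪ T2 → d ∈ T1 ∪ T2 ∨ (a ∈ T1 ∪ T2 ∧ b ∈ T1 ∪ T2) := by
      intro hc'
      rcases Finset.mem_union.1 hc' with h | h
      · exact Or.inr ⟨Finset.mem_union_left _ (mono1 a c hac h),
          Finset.mem_union_left _ (mono1 b c hbc h)⟩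
      · exact Or.inl (Finset.mem_union_right _ (mono2 c d hcd h))
    rw [hPS, PhiT_cons', PhiT_cons']
    have key : (if a ∈ T1 ∪ T2 ∨ b ∈ T1 ∪ T2 then idist (a, b) else 0) +
        (if c ∈ T1 ∪ T2 ∨ d ∈ T1 ∪ T2 then idist (c, d) else 0) <
        (if e1.1 ∈ T1 ∪ T2 ∨ e1.2 ∈ T1 ∪ T2 then idist e1 else 0) +
        (if e2.1 ∈ T1 ∪ T2 ∨ e2.2 ∈ T1 ∪ T2 then idist e2 else 0) := by
      clear hconv hnocross hpart hd1 hd2 hd3 hy hT1 hC hT2 mono1 mono2 hPS hSdec he2 he1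
      clear y1 y2 S
      rcases perm4 hends with ⟨h12, h34⟩ | ⟨h12, h34⟩ | ⟨h12, h34⟩ | ⟨h12, h34⟩ |
        ⟨h12, h34⟩ | ⟨h12, h34⟩
      · -- forbidden: e1 ~ {a,b}, e2 ~ {c,d}
        exfalso
        obtain ⟨h1, h2⟩ | ⟨h1, h2⟩ := h12 <;> obtain ⟨h3, h4⟩ | ⟨h3, h4⟩ := h34 <;>
          rw [h1, h2, h3, h4] at hcross <;>
          exact absurd hcross (seg_sep (by
            refine max_lt (lt_min ?_ ?_) (lt_min ?_ ?_) <;>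
              first
                | exact hdec _ _ hac | exact hdec _ _ had
                | exact hdec _ _ hbc | exact hdec _ _ hbd))
      · -- forbidden: e1 ~ {c,d}, e2 ~ {a,b}
        exfalso
        obtain ⟨h1, h2⟩ | ⟨h1, h2⟩ := h12 <;> obtain ⟨h3, h4⟩ | ⟨h3, h4⟩ := h34 <;>
          rw [h1, h2, h3, h4] at hcross <;>
          exact absurd (segCross_symm_s14 hcross) (seg_sep (by
            refine max_lt (lt_min ?_ ?_) (lt_min ?_ ?_) <;>
              first
                | exact hdec _ _ hac | exact hdec _ _ had
                | exact hdec _ _ hbc | exact hdec _ _ hbd))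
      · rw [contrib_pair (T1 ∪ T2) e1 a c h12, contrib_pair (T1 ∪ T2) e2 b d h34]
        exact ineqA T1 T2 a b c d hab' hbc' hcd' himp1 himp2 hne
      · rw [contrib_pair (T1 ∪ T2) e1 b d h12, contrib_pair (T1 ∪ T2) e2 a c h34]
        have := ineqA T1 T2 a b c d hab' hbc' hcd' himp1 himp2 hne
        omega
      · rw [contrib_pair (T1 ∪ T2) e1 a d h12, contrib_pair (T1 ∪ T2) e2 b c h34]
        exact ineqB T1 T2 a b c d hab' hbc' hcd' himp1 himp2 hne
      · rw [contrib_pair (T1 ∪ T2) e1 b c h12, contrib_pair (T1 ∪ T2) e2 a d h34]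
        have := ineqB T1 T2 a b c d hab' hbc' hcd' himp1 himp2 hne
        omega
    omega
  · rintro ⟨haC, hbC, hcC, hdC⟩
    have hnotT : ∀ i : Fin N, i ∈ ({a, b, c, d} : Multiset (Fin N)) →
        ¬(i ∈ T1 ∪ T2) := by
      intro i hi
      have hiC : i ∈ C := by
        simp only [Multiset.insert_eq_cons, Multiset.mem_cons, Multiset.mem_singleton] at hi
        rcases hi with rfl | rfl | rfl | rfl <;> assumption
      simp only [Finset.mem_union]
      rintro (h | h)
      · exact Finset.disjoint_left.1 hd1 hiC h
      · exact Finset.disjoint_left.1 hd2 hiC h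
    have z1 : ¬(e1.1 ∈ T1 ∪ T2 ∨ e1.2 ∈ T1 ∪ T2) := by
      rintro (h | h)
      · exact hnotT _ (hends ▸ (by simp : e1.1 ∈ ({e1.1, e1.2, e2.1, e2.2} : Multiset (Fin N)))) h
      · exact hnotT _ (hends ▸ (by simp : e1.2 ∈ ({e1.1, e1.2, e2.1, e2.2} : Multiset (Fin N)))) h
    have z2 : ¬(e2.1 ∈ T1 ∪ T2 ∨ e2.2 ∈ T1 ∪ T2) := by
      rintro (h | h)
      · exact hnotT _ (hends ▸ (by simp : e2.1 ∈ ({e1.1, e1.2, e2.1, e2.2} : Multiset (Fin N)))) h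
      · exact hnotT _ (hends ▸ (by simp : e2.2 ∈ ({e1.1, e1.2, e2.1, e2.2} : Multiset (Fin N)))) h
    have w1 : ¬(f1.1 ∈ T1 ∪ T2 ∨ f1.2 ∈ T1 ∪ T2) := by
      rintro (h | h)
      · exact hnotT _ (hends' ▸ (by simp : f1.1 ∈ ({f1.1, f1.2, f2.1, f2.2} : Multiset (Fin N)))) h
      · exact hnotT _ (hends' ▸ (by simp : f1.2 ∈ ({f1.1, f1.2, f2.1, f2.2} : Multiset (Fin N)))) h
    have w2 : ¬(f2.1 ∈ T1 ∪ T2 ∨ f2.2 ∈ T1 ∪ T2) := by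
      rintro (h | h)
      · exact hnotT _ (hends' ▸ (by simp : f2.1 ∈ ({f1.1, f1.2, f2.1, f2.2} : Multiset (Fin N)))) h
      · exact hnotT _ (hends' ▸ (by simp : f2.2 ∈ ({f1.1, f1.2, f2.1, f2.2} : Multiset (Fin N)))) h
    rw [hS', PhiT_cons, PhiT_cons, if_neg w1, if_neg w2, hPS, if_neg z1, if_neg z2]
end
end

section
/- Let C be a set of points in convex position and q a point strictly inside the convex hull of C. If S ∪ {qp1} has no pair of crossing CC-segments (segments with both endpoints in C), and qp1 crosses some CC-segments, then flipping qp1 with the CC-segment p2p3 crossing it farthest from q inserts a CC-segment (p1p2 or p1p3) that crosses no segment of the resulting set. -/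
noncomputable section
open scoped Classical

namespace FlipAux

/-- twice the signed area of the triangle `u v w` -/
def det3 (u v w : Pt) : ℝ := (v 0 - u 0) * (w 1 - u 1) - (v 1 - u 1) * (w 0 - u 0)

lemma det3_cyc (u v w : Pt) : det3 u v w = det3 v w u := by simp only [det3]; ring

lemma det3_swap (u v w : Pt) : det3 u v w = - det3 u w v := by simp only [det3]; ring

lemma det3_left (u v : Pt) : det3 u v u = 0 := by simp only [det3]; ring

lemma det3_right (u v : Pt) : det3 u v v = 0 := by simp only [det3]; ring

lemma det3_affine (u v : Pt) {a b : ℝ} (w1 w2 : Pt) (hab : a + b = 1) :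
    det3 u v (a•w1 + b•w2) = a * det3 u v w1 + b * det3 u v w2 := by
  have hb : b = 1 - a := by linarith
  subst hb
  simp only [det3, PiLp.add_apply, PiLp.smul_apply, smul_eq_mul]
  ring

lemma bary_sum (A B C w : Pt) : det3 B C w + det3 C A w + det3 A B w = det3 A B C := by
  simp only [det3]; ring

lemma bary_pt (A B C w : Pt) :
    (det3 A B C) • w = (det3 B C w)•A + (det3 C A w)•B + (det3 A B w)•C := by
  ext i
  fin_cases i <;>
  · simp only [det3, PiLp.add_apply, PiLp.smul_apply, smul_eq_mul, Fin.mk_zero, Fin.mk_one,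
      Fin.isValue]
    ring

lemma ne_coords {u v : Pt} (h : u ≠ v) : v 0 - u 0 ≠ 0 ∨ v 1 - u 1 ≠ 0 := by
  by_contra hc
  push_neg at hc
  obtain ⟨h0, h1⟩ := hc
  apply h
  ext i
  fin_cases i <;> simp only [Fin.mk_zero, Fin.mk_one, Fin.isValue] <;> linarith

lemma det3_trans {p2 p3 x a : Pt} (h23 : p2 ≠ p3) (hx : det3 p2 p3 x = 0)
    (ha : det3 p2 p3 a = 0) : det3 p3 x a = 0 := by
  have key0 : (p3 0 - p2 0) * det3 p3 x a =
      (x 0 - p3 0) * det3 p2 p3 a + (p3 0 - a 0) * det3 p2 p3 x := by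
    simp only [det3]; ring
  have key1 : (p3 1 - p2 1) * det3 p3 x a =
      (x 1 - p3 1) * det3 p2 p3 a + (p3 1 - a 1) * det3 p2 p3 x := by
    simp only [det3]; ring
  rw [hx, ha] at key0 key1
  rcases ne_coords h23 with h | h
  · have := key0
    rcases mul_eq_zero.1 (by linarith : (p3 0 - p2 0) * det3 p3 x a = 0) with h' | h'
    · exact absurd h' h
    · exact h'
  · rcases mul_eq_zero.1 (by linarith : (p3 1 - p2 1) * det3 p3 x a = 0) with h' | h'
    · exact absurd h' h
    · exact h'

lemma exists_smul_of_det3 {u v w : Pt} (huv : u ≠ v) (h : det3 u v w = 0) :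
    ∃ μ : ℝ, w - u = μ • (v - u) := by
  simp only [det3] at h
  rcases ne_coords huv with h0 | h1
  · refine ⟨(w 0 - u 0)/(v 0 - u 0), ?_⟩
    ext i
    fin_cases i <;>
      simp only [PiLp.sub_apply, PiLp.smul_apply, smul_eq_mul, Fin.mk_zero, Fin.mk_one,
        Fin.isValue]
    · field_simp
    · field_simp
      linear_combination h
  · refine ⟨(w 1 - u 1)/(v 1 - u 1), ?_⟩
    ext i
    fin_cases i <;>
      simp only [PiLp.sub_apply, PiLp.smul_apply, smul_eq_mul, Fin.mk_zero, Fin.mk_one,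
        Fin.isValue]
    · field_simp
      linear_combination -h
    · field_simp


def wgt (u v : Pt) (D : ℝ) (y : Pt) : ℝ := det3 u v y / D

lemma wgt_affine (u v : Pt) (D : ℝ) {a b : ℝ} (hab : a + b = 1) (y1 y2 : Pt) :
    wgt u v D (a•y1 + b•y2) = a * wgt u v D y1 + b * wgt u v D y2 := by
  simp only [wgt, det3_affine u v y1 y2 hab]; ring

lemma segCross_swapR {a b c d : Pt} (h : SegCross a b c d) : SegCross a b d c := by
  obtain ⟨w, h1, h2, hu⟩ := h
  exact ⟨w, h1, by rwa [openSegment_symm], fun y hy1 hy2 => hu y hy1 (by rwa [segment_symm])⟩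

lemma segCross_swapL {a b c d : Pt} (h : SegCross a b c d) : SegCross b a c d := by
  obtain ⟨w, h1, h2, hu⟩ := h
  exact ⟨w, by rwa [openSegment_symm], h2, fun y hy1 hy2 => hu y (by rwa [segment_symm]) hy2⟩

lemma segCross_swapP {a b c d : Pt} (h : SegCross a b c d) : SegCross c d a b := by
  obtain ⟨w, h1, h2, hu⟩ := h
  exact ⟨w, h2, h1, fun y hy1 hy2 => hu y hy2 hy1⟩

lemma no_mid {P : Set Pt} (hP : ConvexPos P) {u v p : Pt} (hu : u ∈ P) (hv : v ∈ P)
    (hp : p ∈ P) (hpu : p ≠ u) (hpv : p ≠ v) (hseg : p ∈ segment ℝ u v) : False := by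
  apply hP p hp
  have hu' : u ∈ P \ {p} := ⟨hu, by simp [Ne.symm hpu]⟩
  have hv' : v ∈ P \ {p} := ⟨hv, by simp [Ne.symm hpv]⟩
  exact segment_subset_convexHull hu' hv' hseg

lemma coll3 {P : Set Pt} (hP : ConvexPos P) {u v w : Pt} (hu : u ∈ P) (hv : v ∈ P) (hw : w ∈ P)
    (huv : u ≠ v) (huw : u ≠ w) (hvw : v ≠ w) (hdet : det3 u v w = 0) : False := by
  obtain ⟨t, ht⟩ := exists_smul_of_det3 huv hdet
  have hrep : w = (1 - t)•u + t•v := by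
    linear_combination (norm := module) ht
  rcases lt_trichotomy t 0 with h | h | h
  · -- u between v and w
    apply no_mid hP hv hw hu huv huw
    have h1t : (0:ℝ) < 1 - t := by linarith
    refine ⟨-t/(1-t), 1/(1-t), div_nonneg (by linarith) (by linarith),
      div_nonneg (by linarith) (by linarith), by field_simp; ring, ?_⟩
    rw [hrep]
    match_scalars <;> (field_simp; try ring)
  · exfalso; apply huw; rw [hrep, h]; simp
  · rcases lt_trichotomy t 1 with h1 | h1 | h1
    · apply no_mid hP hu hv hw (Ne.symm huw) (Ne.symm hvw)
      exact ⟨1-t, t, by linarith, by linarith, by ring, hrep.symm⟩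
    · exfalso; apply hvw; rw [hrep, h1]; simp
    · apply no_mid hP hu hw hv huv.symm hvw
      have ht0 : t ≠ 0 := by linarith
      refine ⟨1 - 1/t, 1/t, ?_, by positivity, by ring, ?_⟩
      · have : 1/t ≤ 1 := by rw [div_le_one (by linarith)]; linarith
        linarith
      · rw [hrep]
        match_scalars <;> (field_simp; try ring)

lemma not_mem_interior {P : Set Pt} (hP : ConvexPos P) {p : Pt} (hp : p ∈ P) :
    p ∉ interior (convexHull ℝ P) := by
  intro hint
  rw [mem_interior_iff_mem_nhds, Metric.mem_nhds_iff] at hint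
  obtain ⟨ε, hε, hball⟩ := hint
  by_cases hex : ∃ c ∈ P, c ≠ p
  · obtain ⟨c, hcP, hcp⟩ := hex
    have hpc : (0:ℝ) < dist p c := dist_pos.2 (Ne.symm hcp)
    set δ : ℝ := ε / (2 * dist p c) with hδdef
    have hδ : 0 < δ := by positivity
    have hb'mem : p + δ•(p - c) ∈ Metric.ball p ε := by
      rw [Metric.mem_ball, dist_eq_norm]
      simp only [add_sub_cancel_left]
      rw [norm_smul, Real.norm_eq_abs, abs_of_pos hδ]
      have hnd : ‖p - c‖ = dist p c := (dist_eq_norm p c).symm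
      rw [hnd, hδdef]
      rw [div_mul_eq_mul_div, div_lt_iff₀ (by positivity)]
      nlinarith
    have hb' := hball hb'mem
    have hPeq : insert p (P \ {p}) = P := by
      rw [Set.insert_diff_singleton]; exact Set.insert_eq_self.2 hp
    have hne : (P \ {p}).Nonempty := ⟨c, hcP, by simp [hcp]⟩
    rw [← hPeq, convexHull_insert hne, mem_convexJoin] at hb'
    obtain ⟨p', hp', y, hy, hseg⟩ := hb'
    rw [Set.mem_singleton_iff] at hp'
    rw [hp'] at hseg
    obtain ⟨u, s, hu, hs, hus, heq⟩ := hseg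
    have hs0 : 0 < s := by
      rcases hs.lt_or_eq with h | h
      · exact h
      · exfalso
        rw [← h, zero_smul, add_zero] at heq
        have hu1 : u = 1 := by linarith
        rw [hu1, one_smul] at heq
        have hz : δ•(p - c) = (0:Pt) := by
          have := congrArg (fun z : Pt => z - p) heq
          simpa using this.symm
        have : p - c = 0 := by
          have := congrArg (fun z : Pt => δ⁻¹ • z) hz
          simpa [smul_smul, inv_mul_cancel₀ (ne_of_gt hδ)] using this
        exact hcp (by have := sub_eq_zero.1 this; rw [this])
    have hsd : 0 < s + δ := by linarith
    apply hP p hp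
    have hne2 : p = ((s+δ)⁻¹*δ)•c + ((s+δ)⁻¹*s)•y := by
      have hkey : (s+δ)•p = δ•c + s•y := by
        have hu' : u = 1 - s := by linarith
        rw [hu'] at heq
        linear_combination (norm := module) -heq
      have h2 := congrArg (fun z : Pt => (s+δ)⁻¹ • z) hkey
      simp only [smul_smul, smul_add] at h2
      rw [inv_mul_cancel₀ (ne_of_gt hsd), one_smul] at h2
      exact h2
    have hcK : c ∈ convexHull ℝ (P \ {p}) := subset_convexHull ℝ _ ⟨hcP, by simp [hcp]⟩
    have hfinal : ((s+δ)⁻¹*δ)•c + ((s+δ)⁻¹*s)•y ∈ convexHull ℝ (P \ {p}) :=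
      (convex_convexHull ℝ (P \ {p})) hcK hy (by positivity) (by positivity)
        (by field_simp [ne_of_gt hsd]; try ring)
    rwa [← hne2] at hfinal
  · push_neg at hex
    have hPp : P = {p} := Set.eq_singleton_iff_unique_mem.2 ⟨hp, fun c hc => hex c hc⟩
    rw [hPp, convexHull_singleton] at hball
    have hmem : p + (ε/2)•(EuclideanSpace.single (0 : Fin 2) (1:ℝ)) ∈ Metric.ball p ε := by
      rw [Metric.mem_ball, dist_eq_norm]
      simp only [add_sub_cancel_left]
      rw [norm_smul, EuclideanSpace.norm_single, Real.norm_eq_abs, Real.norm_eq_abs]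
      rw [abs_of_pos (by linarith : (0:ℝ) < ε/2)]
      simp
      linarith
    have hsing := hball hmem
    rw [Set.mem_singleton_iff] at hsing
    have hv0 : (ε/2)•(EuclideanSpace.single (0:Fin 2) (1:ℝ)) = (0:Pt) := by
      have := congrArg (fun z : Pt => z - p) hsing
      simpa using this
    have hc0 := congrArg (fun z : Pt => z 0) hv0
    simp only [PiLp.smul_apply, smul_eq_mul] at hc0
    rw [EuclideanSpace.single_apply] at hc0
    simp at hc0
    linarith


lemma wgt_sum {x p1 p3 : Pt} {D : ℝ} (hD : D ≠ 0) (hDdef : D = det3 x p1 p3) (y : Pt) :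
    wgt p1 p3 D y + wgt p3 x D y + wgt x p1 D y = 1 := by
  subst hDdef
  simp only [wgt, ← add_div]
  rw [bary_sum x p1 p3 y, div_self hD]

lemma wgt_pt {x p1 p3 : Pt} {D : ℝ} (hD : D ≠ 0) (hDdef : D = det3 x p1 p3) (y : Pt) :
    y = (wgt p1 p3 D y)•x + (wgt p3 x D y)•p1
        + (wgt x p1 D y)•p3 := by
  subst hDdef
  have h := bary_pt x p1 p3 y
  have h2 := congrArg (fun v : Pt => (det3 x p1 p3)⁻¹ • v) h
  simp only [smul_add, smul_smul] at h2
  rw [inv_mul_cancel₀ hD, one_smul] at h2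
  simp only [wgt, div_eq_inv_mul]
  exact h2

lemma no_cross_collinear {a b c d w : Pt} (hw1 : w ∈ openSegment ℝ a b)
    (hw2 : w ∈ openSegment ℝ c d) (hnc : ¬ SegCross a b c d) :
    det3 c d a = 0 ∧ det3 c d b = 0 := by
  obtain ⟨σ, τ, hσ, hτ, hστ, hw⟩ := id hw1
  have hFw : det3 c d w = 0 := by
    obtain ⟨e1, e2, he1, he2, he12, hwe⟩ := hw2
    rw [← hwe, det3_affine c d c d he12, det3_left, det3_right]
    ring
  have h2 : σ * det3 c d a + τ * det3 c d b = 0 := by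
    rw [← hw, det3_affine c d a b hστ] at hFw
    exact hFw
  by_cases hEq : det3 c d a = det3 c d b
  · have hFa : det3 c d a = 0 := by
      rw [← hEq] at h2
      have : (σ + τ) * det3 c d a = 0 := by ring_nf; ring_nf at h2; linarith
      rw [hστ, one_mul] at this
      exact this
    exact ⟨hFa, hEq ▸ hFa⟩
  · exfalso
    apply hnc
    refine ⟨w, hw1, hw2, ?_⟩
    rintro y hy1 hy2
    obtain ⟨u, v, hu, hv, huv, hy⟩ := hy1
    have hFy : det3 c d y = 0 := by
      obtain ⟨e1, e2, he1, he2, he12, hye⟩ := hy2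
      rw [← hye, det3_affine c d c d he12, det3_left, det3_right]
      ring
    have h1 : u * det3 c d a + v * det3 c d b = 0 := by
      rw [← hy, det3_affine c d a b huv] at hFy
      exact hFy
    have hd : det3 c d b - det3 c d a ≠ 0 := sub_ne_zero.2 (Ne.symm hEq)
    have hvτ : v = τ := by
      have hu' : u = 1 - v := by linarith
      have hσ' : σ = 1 - τ := by linarith
      rw [hu'] at h1
      rw [hσ'] at h2
      have hz : (v - τ) * (det3 c d b - det3 c d a) = 0 := by linear_combination h1 - h2
      rcases mul_eq_zero.1 hz with h | h
      · linarith
      · exact absurd h hd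
    have huσ : u = σ := by linarith
    rw [← hy, ← hw, hvτ, huσ]

lemma nondeg {q p1 p2 p3 x : Pt} (hxc : SegCross q p1 p2 p3)
    (hx1 : x ∈ openSegment ℝ q p1) (hx2 : x ∈ openSegment ℝ p2 p3)
    (hq1 : q ≠ p1) (hxp3 : x ≠ p3) : det3 x p1 p3 ≠ 0 := by
  intro hdet
  have hxp1 : x ≠ p1 := by
    rintro rfl
    rw [right_mem_openSegment_iff] at hx1
    exact hq1 hx1
  obtain ⟨μ, hμ⟩ := exists_smul_of_det3 hxp1 hdet
  obtain ⟨k1, k2, hk1, hk2, hk12, hkeq⟩ := id hx1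
  have hp1x : p1 - x = k1 • (p1 - q) := by
    have hk2' : k2 = 1 - k1 := by linarith
    rw [hk2'] at hkeq
    linear_combination (norm := module) hkeq
  set μ' : ℝ := μ * k1 with hμ'def
  have h1 : p3 - x = μ' • (p1 - q) := by
    rw [hμ, hp1x, smul_smul, hμ'def]
  have hμ0 : μ ≠ 0 := by
    rintro rfl
    rw [zero_smul, sub_eq_zero] at hμ
    exact hxp3 hμ.symm
  have hμ'0 : μ' ≠ 0 := mul_ne_zero hμ0 (ne_of_gt hk1)
  set τ : ℝ := min 1 (min k1 k2 / (2*|μ'|)) with hτdef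
  have habs : (0:ℝ) < |μ'| := abs_pos.2 hμ'0
  have hmkk : (0:ℝ) < min k1 k2 := lt_min hk1 hk2
  have hτ0 : 0 < τ := lt_min one_pos (by positivity)
  have hτ1 : τ ≤ 1 := min_le_left _ _
  have hbnd : |τ * μ'| ≤ min k1 k2 / 2 := by
    rw [abs_mul, abs_of_pos hτ0]
    have h2' : τ ≤ min k1 k2 / (2*|μ'|) := min_le_right _ _
    calc τ * |μ'| ≤ (min k1 k2 / (2*|μ'|)) * |μ'| := by nlinarith
    _ = min k1 k2 / 2 := by field_simp
  have hbnd1 : τ * μ' ≤ min k1 k2 / 2 := le_trans (le_abs_self _) hbnd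
  have hbnd2 : -(min k1 k2 / 2) ≤ τ * μ' := by
    have := neg_abs_le (τ * μ')
    linarith
  set θ : ℝ := k2 + τ * μ' with hθdef
  have hθ0 : 0 < θ := by
    have : min k1 k2 ≤ k2 := min_le_right _ _
    simp only [hθdef]; nlinarith
  have hθ1 : θ < 1 := by
    have : min k1 k2 ≤ k1 := min_le_left _ _
    simp only [hθdef]; nlinarith
  set y : Pt := x + (τ * μ') • (p1 - q) with hydef
  have hyx : y ≠ x := by
    simp only [hydef]
    intro hcon
    have : (τ * μ') • (p1 - q) = (0:Pt) := by
      have := congrArg (fun z : Pt => z - x) hcon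
      simpa using this
    rcases smul_eq_zero.1 this with h | h
    · exact (mul_ne_zero (ne_of_gt hτ0) hμ'0) h
    · exact hq1 (sub_eq_zero.1 h).symm
  have hyq : y ∈ segment ℝ q p1 := by
    refine ⟨1 - θ, θ, by linarith, by linarith, by ring, ?_⟩
    have hx' : x = q + k2 • (p1 - q) := by
      have hk1' : k1 = 1 - k2 := by linarith
      rw [hk1'] at hkeq
      linear_combination (norm := module) -hkeq
    rw [hydef, hx', hθdef]
    module
  have hyp23 : y ∈ segment ℝ p2 p3 := by
    have hform : y = (1-τ)•x + τ•p3 := by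
      rw [hydef]
      have : (τ * μ') • (p1 - q) = τ • (p3 - x) := by rw [h1, smul_smul]
      rw [this]
      module
    rw [hform]
    exact (convex_segment p2 p3) (openSegment_subset_segment ℝ p2 p3 hx2)
      (right_mem_segment ℝ p2 p3) (by linarith) (by linarith) (by ring)
  obtain ⟨x0, hx01, hx02, huniq⟩ := hxc
  have e1 : x = x0 := huniq x (openSegment_subset_segment ℝ q p1 hx1)
    (openSegment_subset_segment ℝ p2 p3 hx2)
  have e2 : y = x0 := huniq y hyq hyp23
  exact hyx (by rw [e2, ← e1])


lemma det3_cyc' (u v w : Pt) : det3 u v w = det3 w u v := by rw [det3_cyc, det3_cyc]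

lemma core {P : Set Pt} (hP : ConvexPos P)
    {q p1 p2 p3 x z a b : Pt}
    (hp1 : p1 ∈ P) (hp3 : p3 ∈ P) (ha : a ∈ P)
    (hxint : x ∈ interior (convexHull ℝ P))
    (hx1 : x ∈ openSegment ℝ q p1) (hx2 : x ∈ openSegment ℝ p2 p3)
    (hD : det3 x p1 p3 ≠ 0)
    (h23 : p2 ≠ p3) (hq1 : q ≠ p1)
    (hz1 : z ∈ openSegment ℝ p1 p3) (hz2 : z ∈ openSegment ℝ a b)
    (hnc23 : ¬ SegCross a b p2 p3)
    (hfar' : ∀ y : Pt, y ∈ segment ℝ q p1 → y ∈ segment ℝ a b → dist q y ≤ dist q x)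
    (hsign : 0 < wgt p1 p3 (det3 x p1 p3) a) : False := by
  set D : ℝ := det3 x p1 p3 with hDdef
  clear_value D
  obtain ⟨k1, k2, hk1, hk2, hk12, hkeq⟩ := id hx1
  obtain ⟨e1, e2, he1, he2, he12, heeq⟩ := id hx2
  obtain ⟨g1, g2, hg1, hg2, hg12, hgeq⟩ := id hz1
  obtain ⟨s1, s2, hs1, hs2, hs12, hseq⟩ := id hz2
  -- basic weight values
  have hA_p1 : wgt p1 p3 D p1 = 0 := by simp [wgt, det3_left]
  have hA_p3 : wgt p1 p3 D p3 = 0 := by simp [wgt, det3_right]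
  have hB_p3 : wgt p3 x D p3 = 0 := by simp [wgt, det3_left]
  have hC_p1 : wgt x p1 D p1 = 0 := by simp [wgt, det3_right]
  have hB_p1 : wgt p3 x D p1 = 1 := by
    simp only [wgt, hDdef]
    rw [det3_cyc p3 x p1, ← hDdef]
    exact div_self hD
  have hC_p3 : wgt x p1 D p3 = 1 := by
    simp only [wgt, hDdef]
    rw [← hDdef]
    exact div_self hD
  have hFx23 : det3 p2 p3 x = 0 := by
    rw [← heeq, det3_affine p2 p3 p2 p3 he12, det3_left, det3_right]
    ring
  -- weights at z
  have hA_z : wgt p1 p3 D z = 0 := by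
    rw [← hgeq, wgt_affine _ _ _ hg12, hA_p1, hA_p3]
    ring
  have hB_z : wgt p3 x D z = g1 := by
    rw [← hgeq, wgt_affine _ _ _ hg12, hB_p1, hB_p3]
    ring
  have hC_z : wgt x p1 D z = g2 := by
    rw [← hgeq, wgt_affine _ _ _ hg12, hC_p1, hC_p3]
    ring
  have hBzpos : 0 < wgt p3 x D z := by rw [hB_z]; exact hg1
  have hCzpos : 0 < wgt x p1 D z := by rw [hC_z]; exact hg2
  -- if the B-weight of a is nonzero, a is off the line p2p3
  have hFa23 : wgt p3 x D a ≠ 0 → det3 p2 p3 a ≠ 0 := by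
    intro hBne hFa
    apply hBne
    have h0 : det3 p3 x a = 0 := det3_trans h23 hFx23 hFa
    simp [wgt, h0]
  -- B-path: a common interior point of [a,b] and [p2,p3]
  have haveB : ∀ t : ℝ, 0 < t → t < 1 → (1-t) * (wgt p3 x D z) + t * wgt p3 x D a = 0 →
      0 ≤ (1-t) * (wgt x p1 D z) + t * wgt x p1 D a → wgt p3 x D a ≠ 0 → False := by
    intro t ht0 ht1 hBzero hCnn hBne
    set w : Pt := (1-t)•z + t•a with hwdef
    clear_value w
    have hsum1t : (1-t) + t = 1 := by ring
    have hwB : wgt p3 x D w = 0 := by rw [hwdef, wgt_affine _ _ _ hsum1t]; exact hBzero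
    have hwA : wgt p1 p3 D w = t * wgt p1 p3 D a := by
      rw [hwdef, wgt_affine _ _ _ hsum1t, hA_z]; ring
    have hwApos : 0 < wgt p1 p3 D w := by rw [hwA]; exact mul_pos ht0 hsign
    have hwC : 0 ≤ wgt x p1 D w := by rw [hwdef, wgt_affine _ _ _ hsum1t]; exact hCnn
    have hsum_w := wgt_sum hD hDdef w
    have hpt_w := wgt_pt hD hDdef w
    rw [hwB, zero_smul, add_zero] at hpt_w
    set α : ℝ := wgt p1 p3 D w with hαdef
    clear_value α
    set γ : ℝ := wgt x p1 D w with hγdef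
    clear_value γ
    have hwmem23 : w ∈ openSegment ℝ p2 p3 := by
      have hmm : α * e1 + α * e2 = α := by
        rw [← mul_add, he12, mul_one]
      refine ⟨α * e1, α * e2 + γ,
        mul_pos hwApos he1, ?_, ?_, ?_⟩
      · have := mul_pos hwApos he2; linarith
      · linarith
      · rw [hpt_w, ← heeq]; module
    have hwmemab : w ∈ openSegment ℝ a b := by
      refine ⟨(1-t)*s1 + t, (1-t)*s2, ?_, mul_pos (by linarith) hs2, ?_, ?_⟩
      · have := mul_pos (show (0:ℝ) < 1-t by linarith) hs1; linarith
      · have h1 : (1-t)*s1 + (1-t)*s2 = 1-t := by rw [← mul_add, hs12, mul_one]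
        linarith
      · rw [hwdef, ← hseq]; module
    exact hFa23 hBne (no_cross_collinear hwmemab hwmem23 hnc23).1
  -- C-path: a point of [a,b] on [q,p1] strictly beyond x
  have haveC : ∀ r : ℝ, 0 < r → r < 1 → (1-r) * (wgt x p1 D z) + r * wgt x p1 D a = 0 →
      0 < (1-r) * (wgt p3 x D z) + r * wgt p3 x D a → False := by
    intro r hr0 hr1 hCzero hBpos
    set v : Pt := (1-r)•z + r•a with hvdef
    clear_value v
    have hsum1r : (1-r) + r = 1 := by ring
    have hvC : wgt x p1 D v = 0 := by rw [hvdef, wgt_affine _ _ _ hsum1r]; exact hCzero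
    have hvA : wgt p1 p3 D v = r * wgt p1 p3 D a := by
      rw [hvdef, wgt_affine _ _ _ hsum1r, hA_z]; ring
    have hvApos : 0 < wgt p1 p3 D v := by rw [hvA]; exact mul_pos hr0 hsign
    have hvB : 0 < wgt p3 x D v := by rw [hvdef, wgt_affine _ _ _ hsum1r]; exact hBpos
    have hsum_v := wgt_sum hD hDdef v
    have hpt_v := wgt_pt hD hDdef v
    rw [hvC, zero_smul, add_zero] at hpt_v
    set α : ℝ := wgt p1 p3 D v with hαdef
    clear_value α
    set β : ℝ := wgt p3 x D v with hβdef
    clear_value β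
    have hmm : α * k1 + α * k2 = α := by
      rw [← mul_add, hk12, mul_one]
    have hv_qp1 : v ∈ segment ℝ q p1 := by
      refine ⟨α * k1, α * k2 + β,
        le_of_lt (mul_pos hvApos hk1), ?_, ?_, ?_⟩
      · have := mul_pos hvApos hk2; linarith
      · linarith
      · rw [hpt_v, ← hkeq]; module
    have hv_ab : v ∈ segment ℝ a b := by
      refine ⟨(1-r)*s1 + r, (1-r)*s2, ?_, le_of_lt (mul_pos (by linarith) hs2), ?_, ?_⟩
      · have := mul_pos (show (0:ℝ) < 1-r by linarith) hs1; linarith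
      · have h1 : (1-r)*s1 + (1-r)*s2 = 1-r := by rw [← mul_add, hs12, mul_one]
        linarith
      · rw [hvdef, ← hseq]; module
    have hdist := hfar' v hv_qp1 hv_ab
    have hβpos : 0 < α * k2 + β := by
      have := mul_pos hvApos hk2; linarith
    have hqv : v - q = (α * k2 + β) • (p1 - q) := by
      have hα : α * k1 = 1 - (α * k2 + β) := by linarith
      have hv2 : v = (α * k1)•q + (α * k2 + β)•p1 := by
        rw [hpt_v, ← hkeq]; module
      rw [hv2, hα]; module
    have hqx : x - q = k2 • (p1 - q) := by
      have hk1' : k1 = 1 - k2 := by linarith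
      rw [← hkeq, hk1']; module
    have hN : (0:ℝ) < ‖p1 - q‖ := by
      rw [norm_pos_iff]
      exact sub_ne_zero.2 (Ne.symm hq1)
    have hd1 : dist q v = (α * k2 + β) * ‖p1 - q‖ := by
      rw [dist_comm, dist_eq_norm, hqv, norm_smul, Real.norm_eq_abs, abs_of_pos hβpos]
    have hd2 : dist q x = k2 * ‖p1 - q‖ := by
      rw [dist_comm, dist_eq_norm, hqx, norm_smul, Real.norm_eq_abs, abs_of_pos hk2]
    rw [hd1, hd2] at hdist
    have hβk2 : α * k2 + β ≤ k2 :=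
      le_of_mul_le_mul_right (by linarith) hN
    have hk2lt : k2 < 1 := by linarith
    have hαval : α = 1 - β := by linarith
    have hprod : 0 < β * (1 - k2) := mul_pos hvB (by linarith)
    have h2 : α * k2 = k2 - β * k2 := by rw [hαval]; ring
    have h3 : β * (1 - k2) = β - β * k2 := by ring
    linarith
  -- main case analysis on the position of a
  by_cases hBa : wgt p3 x D a < 0
  · have hBne : wgt p3 x D a ≠ 0 := ne_of_lt hBa
    have hden : 0 < wgt p3 x D z - wgt p3 x D a := by linarith
    set t : ℝ := (wgt p3 x D z) / (wgt p3 x D z - wgt p3 x D a) with htdef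
    clear_value t
    have ht0 : 0 < t := by rw [htdef]; exact div_pos hBzpos hden
    have ht1 : t < 1 := by rw [htdef, div_lt_one hden]; linarith
    have hBt : (1-t) * (wgt p3 x D z) + t * wgt p3 x D a = 0 := by
      rw [htdef]; field_simp [ne_of_gt hden]; ring
    by_cases hCa0 : 0 ≤ wgt x p1 D a
    · refine haveB t ht0 ht1 hBt ?_ hBne
      have h1 : 0 ≤ (1-t) * wgt x p1 D z := le_of_lt (mul_pos (by linarith) hCzpos)
      have h2 : 0 ≤ t * wgt x p1 D a := mul_nonneg (le_of_lt ht0) hCa0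
      linarith
    · push_neg at hCa0
      have hdenr : 0 < wgt x p1 D z - wgt x p1 D a := by linarith
      set r : ℝ := (wgt x p1 D z) / (wgt x p1 D z - wgt x p1 D a) with hrdef
      clear_value r
      have hr0 : 0 < r := by rw [hrdef]; exact div_pos hCzpos hdenr
      have hr1 : r < 1 := by rw [hrdef, div_lt_one hdenr]; linarith
      have hCr : (1-r) * (wgt x p1 D z) + r * wgt x p1 D a = 0 := by
        rw [hrdef]; field_simp [ne_of_gt hdenr]; ring
      by_cases hrt : r < t
      · refine haveC r hr0 hr1 hCr ?_
        have h4 : (1-r) * wgt p3 x D z + r * wgt p3 x D a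
            = (t-r)*(wgt p3 x D z - wgt p3 x D a) := by linear_combination hBt
        have h5 : 0 < (t-r)*(wgt p3 x D z - wgt p3 x D a) :=
          mul_pos (by linarith) hden
        linarith
      · push_neg at hrt
        refine haveB t ht0 ht1 hBt ?_ hBne
        have h4 : (1-t) * wgt x p1 D z + t * wgt x p1 D a
            = (r-t)*(wgt x p1 D z - wgt x p1 D a) := by linear_combination hCr
        have h5 : 0 ≤ (r-t)*(wgt x p1 D z - wgt x p1 D a) :=
          mul_nonneg (by linarith) (le_of_lt hdenr)
        linarith
  · push_neg at hBa
    by_cases hCa : 0 ≤ wgt x p1 D a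
    · -- Case A : a inside the triangle x p1 p3
      have hpt_a := wgt_pt hD hDdef a
      have hsum_a := wgt_sum hD hDdef a
      set wA : ℝ := wgt p1 p3 D a with hwAdef
      clear_value wA
      set wB : ℝ := wgt p3 x D a with hwBdef
      clear_value wB
      set wC : ℝ := wgt x p1 D a with hwCdef
      clear_value wC
      by_cases hτ : wB + wC = 0
      · have hB0 : wB = 0 := by linarith
        have hC0 : wC = 0 := by linarith
        have hA1 : wA = 1 := by linarith
        have hax : a = x := by rw [hpt_a, hB0, hC0, hA1]; simp
        exact not_mem_interior hP ha (hax ▸ hxint)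
      · have hτpos : 0 < wB + wC := (add_nonneg hBa hCa).lt_of_ne (Ne.symm hτ)
        have hm : ((wB/(wB + wC))•p1 + (wC/(wB + wC))•p3 : Pt) ∈ convexHull ℝ P := by
          apply segment_subset_convexHull hp1 hp3
          exact ⟨_, _, div_nonneg hBa (le_of_lt hτpos), div_nonneg hCa (le_of_lt hτpos),
            by field_simp [ne_of_gt hτpos], rfl⟩
        have hax : a = wA•x + (wB + wC)•((wB/(wB + wC))•p1 + (wC/(wB + wC))•p3) := by
          rw [hpt_a]
          match_scalars <;> (field_simp [ne_of_gt hτpos]; try ring)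
        have hint2 : a ∈ interior (convexHull ℝ P) := by
          rw [hax]
          exact (convex_convexHull ℝ P).combo_interior_closure_mem_interior hxint
            (subset_closure hm) hsign (le_of_lt hτpos) (by linarith)
        exact not_mem_interior hP ha hint2
    · push_neg at hCa
      have hdenr : 0 < wgt x p1 D z - wgt x p1 D a := by linarith
      set r : ℝ := (wgt x p1 D z) / (wgt x p1 D z - wgt x p1 D a) with hrdef
      clear_value r
      have hr0 : 0 < r := by rw [hrdef]; exact div_pos hCzpos hdenr
      have hr1 : r < 1 := by rw [hrdef, div_lt_one hdenr]; linarith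
      have hCr : (1-r) * (wgt x p1 D z) + r * wgt x p1 D a = 0 := by
        rw [hrdef]; field_simp [ne_of_gt hdenr]; ring
      refine haveC r hr0 hr1 hCr ?_
      have h1 : 0 < (1-r) * wgt p3 x D z := mul_pos (by linarith) hBzpos
      have h2 : 0 ≤ r * wgt p3 x D a := mul_nonneg (le_of_lt hr0) hBa
      linarith

lemma main_aux {P : Set Pt} (hP : ConvexPos P)
    {q p1 p2 p3 : Pt} (hp1 : p1 ∈ P) (hp2 : p2 ∈ P) (hp3 : p3 ∈ P)
    (hq : q ∈ interior (convexHull ℝ P))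
    {x : Pt} (hx1 : x ∈ openSegment ℝ q p1) (hx2 : x ∈ openSegment ℝ p2 p3)
    (hxc : SegCross q p1 p2 p3)
    {a b : Pt} (ha : a ∈ P) (hb : b ∈ P)
    (hnc23 : ¬ SegCross a b p2 p3)
    (hfar' : ∀ y : Pt, y ∈ segment ℝ q p1 → y ∈ segment ℝ a b → dist q y ≤ dist q x) :
    ¬ SegCross p1 p3 a b := by
  intro hcross
  have hq1 : q ≠ p1 := by
    rintro rfl
    exact not_mem_interior hP hp1 hq
  have hxint : x ∈ interior (convexHull ℝ P) :=
    (convex_convexHull ℝ P).openSegment_interior_self_subset_interior hq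
      (subset_convexHull ℝ P hp1) hx1
  have hxP : ∀ p ∈ P, x ≠ p := by
    rintro p hpP rfl
    exact not_mem_interior hP hpP hxint
  have hp13 : p1 ≠ p3 := by
    intro h
    obtain ⟨x0, h1, h2, hu⟩ := hxc
    have hp1x0 : p1 = x0 := hu p1 (right_mem_segment ℝ q p1) (h ▸ right_mem_segment ℝ p2 p3)
    have hx0mem := h1
    rw [← hp1x0, right_mem_openSegment_iff] at hx0mem
    exact hq1 hx0mem
  have hp23 : p2 ≠ p3 := by
    intro h
    rw [h, openSegment_same] at hx2
    exact hxP p3 hp3 (Set.mem_singleton_iff.1 hx2)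
  have hxp3 : x ≠ p3 := hxP p3 hp3
  have hD : det3 x p1 p3 ≠ 0 := nondeg hxc hx1 hx2 hq1 hxp3
  obtain ⟨z, hz1, hz2, huniq⟩ := hcross
  obtain ⟨s1, s2, hs1, hs2, hs12, hseq⟩ := id hz2
  have hA_z : wgt p1 p3 (det3 x p1 p3) z = 0 := by
    obtain ⟨g1, g2, hg1, hg2, hg12, hgeq⟩ := id hz1
    rw [← hgeq, wgt_affine _ _ _ hg12]
    simp [wgt, det3_left, det3_right]
  have hrel : s1 * wgt p1 p3 (det3 x p1 p3) a + s2 * wgt p1 p3 (det3 x p1 p3) b = 0 := by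
    rw [← hseq, wgt_affine _ _ _ hs12] at hA_z
    exact hA_z
  rcases lt_trichotomy (wgt p1 p3 (det3 x p1 p3) a) 0 with hneg | hzero | hpos
  · have hbpos : 0 < wgt p1 p3 (det3 x p1 p3) b := by nlinarith
    refine core (a := b) (b := a) hP hp1 hp3 hb hxint hx1 hx2 hD hp23 hq1 hz1 ?_ ?_ ?_ hbpos
    · rw [openSegment_symm] at hz2
      exact hz2
    · intro hsc
      exact hnc23 (segCross_swapL hsc)
    · intro y hy1 hy2
      rw [segment_symm] at hy2
      exact hfar' y hy1 hy2
  · have hdeta : det3 p1 p3 a = 0 := by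
      have hw : wgt p1 p3 (det3 x p1 p3) a = det3 p1 p3 a / det3 x p1 p3 := rfl
      rw [hw] at hzero
      exact (div_eq_zero_iff.1 hzero).resolve_right hD
    by_cases hap1 : a = p1
    · have haz : a = z := huniq a (hap1 ▸ left_mem_segment ℝ p1 p3) (left_mem_segment ℝ a b)
      rw [← haz, hap1, left_mem_openSegment_iff] at hz1
      exact hp13 hz1
    · by_cases hap3 : a = p3
      · have haz : a = z := huniq a (hap3 ▸ right_mem_segment ℝ p1 p3) (left_mem_segment ℝ a b)
        rw [← haz, hap3, right_mem_openSegment_iff] at hz1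
        exact hp13 hz1
      · exact coll3 hP hp1 hp3 ha hp13 (Ne.symm hap1) (Ne.symm hap3) hdeta
  · exact core hP hp1 hp3 ha hxint hx1 hx2 hD hp23 hq1 hz1 hz2 hnc23 hfar' hpos

end FlipAux

open FlipAux in
/-- Flipping the segment `q p1` (with `q` strictly inside the convex hull of `C`)
with the `CC`-segment `p2p3` crossing it farthest from `q`, in a configuration
with no pair of crossing `CC`-segments, inserts a `CC`-segment (`p1p3` or `p1p2`)
that crosses no segment of the resulting set. -/
theorem farthest_flip_inserts_crossingfree_CC_segment
    (C : Finset Pt) (hC : ConvexPos (C : Set Pt))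
    (q p1 p2 p3 : Pt) (hp1 : p1 ∈ C) (hp2 : p2 ∈ C) (hp3 : p3 ∈ C)
    (hq : q ∈ interior (convexHull ℝ (C : Set Pt)))
    (S : Finset (Pt × Pt)) (hends : ∀ e ∈ S, e.1 ∈ C ∧ e.2 ∈ C)
    (hfree : ∀ e ∈ S, ∀ e' ∈ S, ¬ SegCross e.1 e.2 e'.1 e'.2)
    (h23 : (p2, p3) ∈ S)
    (x : Pt) (hx1 : x ∈ openSegment ℝ q p1) (hx2 : x ∈ openSegment ℝ p2 p3)
    (hxc : SegCross q p1 p2 p3)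
    (hfar : ∀ e ∈ S, ∀ y : Pt, y ∈ segment ℝ q p1 → y ∈ segment ℝ e.1 e.2 →
      dist q y ≤ dist q x) :
    (¬ SegCross q p2 p1 p3 →
      ∀ e ∈ insert (q, p2) (S.erase (p2, p3)), ¬ SegCross p1 p3 e.1 e.2) ∧
    (¬ SegCross q p3 p1 p2 →
      ∀ e ∈ insert (q, p3) (S.erase (p2, p3)), ¬ SegCross p1 p2 e.1 e.2) := by
  have hp1' : p1 ∈ (C : Set Pt) := hp1
  have hp2' : p2 ∈ (C : Set Pt) := hp2
  have hp3' : p3 ∈ (C : Set Pt) := hp3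
  constructor
  · intro hq2 e he
    rcases Finset.mem_insert.1 he with rfl | he'
    · intro hsc
      exact hq2 (segCross_swapP hsc)
    · have heS : e ∈ S := Finset.mem_erase.1 he' |>.2
      exact main_aux hC hp1' hp2' hp3' hq hx1 hx2 hxc
        (Finset.mem_coe.2 (hends e heS).1) (Finset.mem_coe.2 (hends e heS).2)
        (hfree e heS (p2, p3) h23) (hfar e heS)
  · intro hq3 e he
    rcases Finset.mem_insert.1 he with rfl | he'
    · intro hsc
      exact hq3 (segCross_swapP hsc)
    · have heS : e ∈ S := Finset.mem_erase.1 he' |>.2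
      have hx2' : x ∈ openSegment ℝ p3 p2 := by rwa [openSegment_symm]
      have hxc' : SegCross q p1 p3 p2 := segCross_swapR hxc
      have hnc' : ¬ SegCross e.1 e.2 p3 p2 := fun h =>
        hfree e heS (p2, p3) h23 (segCross_swapR h)
      exact main_aux hC hp1' hp3' hp2' hq hx1 hx2' hxc'
        (Finset.mem_coe.2 (hends e heS).1) (Finset.mem_coe.2 (hends e heS).2)
        hnc' (hfar e heS)
end
end

section
/- Let q be a point outside the convex hull of a point set C in convex position, and let s be a segment from q to a point of C such that s has no crossings with a set S of segments with endpoints in C ∪ {q}, but the line supporting s does cross some segment of S. Then no flip performed on two segments of S can insert a segment crossing s; i.e., s is uncrossable. -/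
noncomputable section

namespace UncrossAux

lemma pt_ext {x y : Pt} (h0 : x 0 = y 0) (h1 : x 1 = y 1) : x = y := by
  ext i; fin_cases i <;> assumption

/-- signed area relative to the line through `q` and `p` -/
def fl (q p x : Pt) : ℝ := (p 0 - q 0) * (x 1 - q 1) - (p 1 - q 1) * (x 0 - q 0)

/-- coordinate along the line through `q` and `p` -/
def gl (q p x : Pt) : ℝ := (p 0 - q 0) * (x 0 - q 0) + (p 1 - q 1) * (x 1 - q 1)

lemma coord_comb (s t : ℝ) (x y : Pt) (i : Fin 2) : (s • x + t • y) i = s * x i + t * y i := by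
  simp [PiLp.add_apply, PiLp.smul_apply]

lemma fl_comb (q p x y : Pt) (s t : ℝ) (hst : s + t = 1) :
    fl q p (s • x + t • y) = s * fl q p x + t * fl q p y := by
  have h : s = 1 - t := by linarith
  subst h
  simp only [fl, coord_comb]; ring

lemma gl_comb (q p x y : Pt) (s t : ℝ) (hst : s + t = 1) :
    gl q p (s • x + t • y) = s * gl q p x + t * gl q p y := by
  have h : s = 1 - t := by linarith
  subst h
  simp only [gl, coord_comb]; ring

lemma fl_q (q p : Pt) : fl q p q = 0 := by simp [fl]
lemma fl_p (q p : Pt) : fl q p p = 0 := by simp [fl]; ring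
lemma gl_q (q p : Pt) : gl q p q = 0 := by simp [gl]

lemma N_pos {q p : Pt} (h : q ≠ p) : 0 < gl q p p := by
  have h0 : p 0 - q 0 ≠ 0 ∨ p 1 - q 1 ≠ 0 := by
    by_contra hcon
    push_neg at hcon
    exact h (pt_ext (by linarith [hcon.1]) (by linarith [hcon.2])).symm
  unfold gl
  rcases h0 with h0 | h0 <;>
    nlinarith [mul_self_pos.mpr h0, mul_self_nonneg (p 0 - q 0), mul_self_nonneg (p 1 - q 1)]

lemma on_line {q p x : Pt} (hqp : q ≠ p) (hf : fl q p x = 0) :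
    x = q + (gl q p x / gl q p p) • (p - q) := by
  have hN := (N_pos hqp).ne'
  apply pt_ext <;>
    · simp only [PiLp.add_apply, PiLp.smul_apply, PiLp.sub_apply, smul_eq_mul]
      unfold fl gl at *
      rw [div_mul_eq_mul_div, eq_comm, add_div' _ _ _ hN, div_eq_iff hN]
      first
        | linear_combination (p 1 - q 1) * hf
        | linear_combination (-(p 0 - q 0)) * hf

lemma seg_param {x a b : Pt} (h : x ∈ segment ℝ a b) :
    ∃ t ∈ Set.Icc (0:ℝ) 1, x = (1 - t) • a + t • b := by
  rw [segment_eq_image] at h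
  obtain ⟨t, ht, hx⟩ := h
  exact ⟨t, ht, hx.symm⟩

lemma open_param {x a b : Pt} (h : x ∈ openSegment ℝ a b) :
    ∃ t ∈ Set.Ioo (0:ℝ) 1, x = (1 - t) • a + t • b := by
  rw [openSegment_eq_image] at h
  obtain ⟨t, ht, hx⟩ := h
  exact ⟨t, ht, hx.symm⟩

lemma fl_vanish {q p x : Pt} (h : x ∈ segment ℝ q p) : fl q p x = 0 := by
  obtain ⟨t, _, rfl⟩ := seg_param h
  rw [fl_comb q p q p (1-t) t (by ring), fl_q, fl_p]; ring

lemma gl_open {q p x : Pt} (hqp : q ≠ p) (h : x ∈ openSegment ℝ q p) :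
    0 < gl q p x ∧ gl q p x < gl q p p := by
  obtain ⟨t, ht, rfl⟩ := open_param h
  have hN := N_pos hqp
  rw [gl_comb q p q p (1-t) t (by ring), gl_q]
  constructor <;> nlinarith [ht.1, ht.2]

lemma mem_open_of_fg {q p x : Pt} (hqp : q ≠ p) (hf : fl q p x = 0)
    (h1 : 0 < gl q p x) (h2 : gl q p x < gl q p p) : x ∈ openSegment ℝ q p := by
  have hN := N_pos hqp
  rw [on_line hqp hf, openSegment_eq_image]
  refine ⟨gl q p x / gl q p p, ⟨div_pos h1 hN, (div_lt_one hN).2 h2⟩, by module⟩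

lemma segCross_of_mem {q p a b u : Pt} (ha : fl q p a ≠ 0)
    (hu1 : u ∈ openSegment ℝ a b) (hu2 : u ∈ openSegment ℝ q p) :
    SegCross q p a b := by
  refine ⟨u, hu2, hu1, ?_⟩
  intro y hy1 hy2
  obtain ⟨ty, hty, rfl⟩ := seg_param hy2
  obtain ⟨tu, htu, hu⟩ := seg_param (openSegment_subset_segment ℝ a b hu1)
  have hfy : (1 - ty) * fl q p a + ty * fl q p b = 0 := by
    rw [← fl_comb q p a b (1-ty) ty (by ring)]; exact fl_vanish hy1
  have hfu : (1 - tu) * fl q p a + tu * fl q p b = 0 := by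
    rw [← fl_comb q p a b (1-tu) tu (by ring), ← hu]
    exact fl_vanish (openSegment_subset_segment ℝ q p hu2)
  have hab : fl q p a - fl q p b ≠ 0 := by
    intro hh
    apply ha
    linear_combination hfy + ty * hh
  have : ty = tu := by
    have h1 : ty * (fl q p a - fl q p b) = fl q p a := by linarith
    have h2 : tu * (fl q p a - fl q p b) = fl q p a := by linarith
    exact mul_right_cancel₀ hab (by rw [h1, h2])
  rw [this, hu]

/-- a point on the line through `u,w` whose parameter lies between them is on the segment -/
lemma mem_seg_param {q v u w : Pt} {cu cw t : ℝ} (hu : u = q + cu • v) (hw : w = q + cw • v)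
    (hmin : min cu cw ≤ t) (hmax : t ≤ max cu cw) : q + t • v ∈ segment ℝ u w := by
  rcases eq_or_ne cu cw with heq | hcucw
  · subst heq
    have ht : t = cu := le_antisymm (by simpa using hmax) (by simpa using hmin)
    subst ht
    rw [← hu]
    exact left_mem_segment ℝ u w
  · have hne : cw - cu ≠ 0 := sub_ne_zero.mpr (Ne.symm hcucw)
    have hσ01 : 0 ≤ (t - cu)/(cw - cu) ∧ (t - cu)/(cw - cu) ≤ 1 := by
      rcases lt_or_gt_of_ne hcucw with h1 | h1
      · rw [min_eq_left h1.le] at hmin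
        rw [max_eq_right h1.le] at hmax
        exact ⟨div_nonneg (by linarith) (by linarith),
          (div_le_one (by linarith)).2 (by linarith)⟩
      · rw [min_eq_right h1.le] at hmin
        rw [max_eq_left h1.le] at hmax
        constructor
        · rw [div_nonneg_iff]
          right; constructor <;> linarith
        · rw [div_le_one_iff]
          right; right; constructor <;> linarith
    have hcoef : (1 - (t - cu)/(cw - cu)) * cu + ((t - cu)/(cw - cu)) * cw = t := by
      field_simp
      ring
    rw [segment_eq_image]
    refine ⟨(t - cu)/(cw - cu), ⟨hσ01.1, hσ01.2⟩, ?_⟩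
    have hmod : (1 - (t - cu)/(cw - cu)) • (q + cu • v) + ((t - cu)/(cw - cu)) • (q + cw • v)
        = q + ((1 - (t - cu)/(cw - cu)) * cu + ((t - cu)/(cw - cu)) * cw) • v := by module
    show (1 - (t - cu)/(cw - cu)) • u + ((t - cu)/(cw - cu)) • w = q + t • v
    rw [hu, hw, hmod, hcoef]

set_option maxHeartbeats 1000000 in
lemma opp {q p u w : Pt} (hqp : q ≠ p) (huw : u ≠ w) (h : SegCross u w q p) :
    fl q p u * fl q p w < 0 := by
  obtain ⟨z, hz1, hz2, huniq⟩ := h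
  obtain ⟨s, hs, hzeq⟩ := open_param hz1
  have hfz : fl q p z = 0 := fl_vanish (openSegment_subset_segment ℝ q p hz2)
  have hcomb : (1 - s) * fl q p u + s * fl q p w = 0 := by
    rw [← fl_comb q p u w (1-s) s (by ring), ← hzeq]; exact hfz
  by_contra hcon
  push_neg at hcon
  have hboth : fl q p u = 0 ∧ fl q p w = 0 := by
    rcases lt_trichotomy (fl q p u) 0 with h1 | h1 | h1
    · exfalso
      have hfw : fl q p w ≤ 0 := by
        by_contra hfw
        push_neg at hfw
        nlinarith [mul_neg_of_neg_of_pos h1 hfw]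
      nlinarith [mul_neg_of_pos_of_neg (show (0:ℝ) < 1 - s by linarith [hs.2]) h1,
        mul_nonpos_of_nonneg_of_nonpos hs.1.le hfw]
    · refine ⟨h1, ?_⟩
      rw [h1] at hcomb
      have hs1 := hs.1
      nlinarith
    · exfalso
      have hfw : fl q p w ≥ 0 := by
        by_contra hfw
        push_neg at hfw
        nlinarith [mul_neg_of_pos_of_neg h1 hfw]
      nlinarith [mul_pos (show (0:ℝ) < 1 - s by linarith [hs.2]) h1,
        mul_nonneg hs.1.le hfw]
  set v : Pt := p - q with hv_def
  obtain ⟨cu, hu_eq⟩ : ∃ c : ℝ, u = q + c • v := ⟨_, on_line hqp hboth.1⟩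
  obtain ⟨cw, hw_eq⟩ : ∃ c : ℝ, w = q + c • v := ⟨_, on_line hqp hboth.2⟩
  have hv : v ≠ 0 := sub_ne_zero.mpr (Ne.symm hqp)
  obtain ⟨tz, htz, hz_eq2⟩ := open_param hz2
  have hz_eq2' : z = q + tz • v := by rw [hz_eq2]; module
  have hz_eq1' : z = q + ((1 - s) * cu + s * cw) • v := by
    rw [hzeq, hu_eq, hw_eq]; module
  have hkey : (1 - s) * cu + s * cw = tz := by
    have h2 : ((1 - s) * cu + s * cw) • v = tz • v := by
      have := hz_eq1'.symm.trans hz_eq2'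
      exact add_left_cancel this
    have h3 : (((1 - s) * cu + s * cw) - tz) • v = 0 := by
      rw [sub_smul, h2, sub_self]
    rcases smul_eq_zero.mp h3 with h4 | h4
    · linarith [h4]
    · exact absurd h4 hv
  have hcucw : cu ≠ cw := by
    intro hh
    apply huw
    rw [hu_eq, hw_eq, hh]
  have hlo : min cu cw < tz := by
    rcases lt_or_gt_of_ne hcucw with h1 | h1
    · rw [min_eq_left h1.le, ← hkey]; nlinarith [hs.1, hs.2]
    · rw [min_eq_right h1.le, ← hkey]; nlinarith [hs.1, hs.2]
  have hhi : tz < max cu cw := by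
    rcases lt_or_gt_of_ne hcucw with h1 | h1
    · rw [max_eq_right h1.le, ← hkey]; nlinarith [hs.1, hs.2]
    · rw [max_eq_left h1.le, ← hkey]; nlinarith [hs.1, hs.2]
  obtain ⟨t', ht'0, ht'le1, ht'gt, hminle, hlemax⟩ :
      ∃ t' : ℝ, 0 ≤ t' ∧ t' ≤ 1 ∧ tz < t' ∧ min cu cw ≤ t' ∧ t' ≤ max cu cw := by
    refine ⟨(tz + min (max cu cw) 1)/2, ?_, ?_, ?_, ?_, ?_⟩
    · have h1 : tz < min (max cu cw) 1 := lt_min hhi htz.2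
      linarith [htz.1]
    · have h1 : min (max cu cw) 1 ≤ 1 := min_le_right _ _
      linarith [htz.2]
    · have h1 : tz < min (max cu cw) 1 := lt_min hhi htz.2
      linarith
    · have h1 : tz < min (max cu cw) 1 := lt_min hhi htz.2
      linarith [hlo]
    · have h1 : min (max cu cw) 1 ≤ max cu cw := min_le_left _ _
      linarith
  have hx'qp : q + t' • v ∈ segment ℝ q p := by
    rw [segment_eq_image]
    exact ⟨t', ⟨ht'0, ht'le1⟩, by module⟩
  have hx'uw : q + t' • v ∈ segment ℝ u w := mem_seg_param hu_eq hw_eq hminle hlemax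
  have := huniq _ hx'uw hx'qp
  rw [hz_eq2'] at this
  have h2 : t' • v = tz • v := add_left_cancel this
  have h3 : (t' - tz) • v = 0 := by rw [sub_smul, h2, sub_self]
  rcases smul_eq_zero.mp h3 with h4 | h4
  · have ht'tz : t' = tz := by linarith [h4]
    linarith
  · exact absurd h4 hv

lemma cross_point {q p a b y : Pt} (hqp : q ≠ p) (ha : fl q p a ≠ 0)
    (hy : y ∈ openSegment ℝ a b) (hopp : fl q p a * fl q p y < 0)
    (hnab : ¬ SegCross q p a b) :
    ∃ w ∈ segment ℝ a y, fl q p w = 0 ∧ (gl q p w ≤ 0 ∨ gl q p p ≤ gl q p w) := by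
  have hfafy : fl q p a - fl q p y ≠ 0 := by
    intro hh
    have h2 : fl q p y = fl q p a := by linarith
    rw [h2] at hopp
    nlinarith [mul_self_nonneg (fl q p a)]
  have hr01 : 0 < fl q p a / (fl q p a - fl q p y) ∧ fl q p a / (fl q p a - fl q p y) < 1 := by
    rcases lt_trichotomy (fl q p a) 0 with h1 | h1 | h1
    · have hy1 : 0 < fl q p y := by nlinarith
      constructor
      · exact div_pos_of_neg_of_neg h1 (by linarith)
      · rw [div_lt_one_iff]
        right; right; exact ⟨by linarith, by linarith⟩
    · exact absurd h1 ha
    · have hy1 : fl q p y < 0 := by nlinarith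
      constructor
      · exact div_pos h1 (by linarith)
      · rw [div_lt_one (by linarith)]
        linarith
  set r := fl q p a / (fl q p a - fl q p y) with hr_def
  refine ⟨(1 - r) • a + r • y, ?_, ?_, ?_⟩
  · rw [segment_eq_image]
    exact ⟨r, ⟨hr01.1.le, hr01.2.le⟩, rfl⟩
  · rw [fl_comb q p a y (1-r) r (by ring), hr_def]
    field_simp
    ring
  · obtain ⟨t, ht, hy_eq⟩ := open_param hy
    have hw_ab : (1 - r) • a + r • y ∈ openSegment ℝ a b := by
      rw [openSegment_eq_image]
      refine ⟨r * t, ⟨by nlinarith [hr01.1, ht.1], by nlinarith [hr01.2, ht.2, ht.1, hr01.1]⟩, ?_⟩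
      rw [hy_eq]
      module
    by_contra hcon
    push_neg at hcon
    exact hnab (segCross_of_mem ha hw_ab
      (mem_open_of_fg hqp (by
        rw [fl_comb q p a y (1-r) r (by ring), hr_def]; field_simp; ring) hcon.1 hcon.2))

set_option maxHeartbeats 2000000 in
lemma core {C : Finset Pt} (hC : ConvexPos (C : Set Pt)) {q p a b c d y : Pt}
    (haC : a ∈ C) (hbC : b ∈ C) (hcC : c ∈ C) (hdC : d ∈ C) (hpC : p ∈ C)
    (hq : q ∉ convexHull ℝ (C : Set Pt))
    (hbc : b ≠ c) (hda : d ≠ a)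
    (hy1 : y ∈ openSegment ℝ a b) (hy2 : y ∈ openSegment ℝ c d)
    (hfa : 0 < fl q p a) (hfc : fl q p c < 0)
    (hnab : ¬ SegCross q p a b) (hncd : ¬ SegCross q p c d)
    (hacqp : SegCross a c q p) : False := by
  have hpC' : (p : Pt) ∈ (C : Set Pt) := by exact_mod_cast hpC
  have hqp : q ≠ p := by
    rintro rfl
    exact hq (subset_convexHull ℝ _ hpC')
  have hN := N_pos hqp
  obtain ⟨z, hz1, hz2, -⟩ := hacqp
  have hzf : fl q p z = 0 := fl_vanish (openSegment_subset_segment ℝ q p hz2)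
  have hzg := gl_open hqp hz2
  have hTconv : Convex ℝ (convexHull ℝ ({a, c, y} : Set Pt)) := convex_convexHull ℝ _
  have haT : a ∈ convexHull ℝ ({a, c, y} : Set Pt) := subset_convexHull ℝ _ (by simp)
  have hcT : c ∈ convexHull ℝ ({a, c, y} : Set Pt) := subset_convexHull ℝ _ (by simp)
  have hyT : y ∈ convexHull ℝ ({a, c, y} : Set Pt) := subset_convexHull ℝ _ (by simp)
  have hzT : z ∈ convexHull ℝ ({a, c, y} : Set Pt) :=
    hTconv.segment_subset haT hcT (openSegment_subset_segment ℝ a c hz1)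
  have hW : ∃ w ∈ convexHull ℝ ({a, c, y} : Set Pt),
      fl q p w = 0 ∧ (gl q p w ≤ 0 ∨ gl q p p ≤ gl q p w) := by
    rcases lt_trichotomy (fl q p y) 0 with hfy | hfy | hfy
    · obtain ⟨w, hwseg, hwf, hwg⟩ :=
        cross_point hqp hfa.ne' hy1 (mul_neg_of_pos_of_neg hfa hfy) hnab
      exact ⟨w, hTconv.segment_subset haT hyT hwseg, hwf, hwg⟩
    · refine ⟨y, hyT, hfy, ?_⟩
      by_contra hcon
      push_neg at hcon
      exact hnab (segCross_of_mem hfa.ne' hy1 (mem_open_of_fg hqp hfy hcon.1 hcon.2))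
    · obtain ⟨w, hwseg, hwf, hwg⟩ :=
        cross_point hqp hfc.ne hy2 (mul_neg_of_neg_of_pos hfc hfy) hncd
      exact ⟨w, hTconv.segment_subset hcT hyT hwseg, hwf, hwg⟩
  obtain ⟨w, hwT, hwf, hwg⟩ := hW
  have hz_eq : z = q + (gl q p z / gl q p p) • (p - q) := on_line hqp hzf
  have hw_eq : w = q + (gl q p w / gl q p p) • (p - q) := on_line hqp hwf
  rcases hwg with hwg | hwg
  · -- exit towards q : q is inside the hull, contradiction
    have hqmem : q ∈ segment ℝ w z := by
      have h0 : q + (0:ℝ) • (p - q) ∈ segment ℝ w z := by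
        refine mem_seg_param hw_eq hz_eq ?_ ?_
        · refine min_le_of_left_le ?_
          exact div_nonpos_of_nonpos_of_nonneg hwg hN.le
        · refine le_max_of_le_right ?_
          exact (div_pos hzg.1 hN).le
      simpa using h0
    have hqhull : q ∈ convexHull ℝ (C : Set Pt) := by
      have hsub : convexHull ℝ ({a, c, y} : Set Pt) ⊆ convexHull ℝ (C : Set Pt) := by
        apply convexHull_min _ (convex_convexHull ℝ _)
        intro x hx
        simp only [Set.mem_insert_iff, Set.mem_singleton_iff] at hx
        rcases hx with rfl | rfl | rfl
        · exact subset_convexHull ℝ _ (by exact_mod_cast haC)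
        · exact subset_convexHull ℝ _ (by exact_mod_cast hcC)
        · exact (convex_convexHull ℝ _).segment_subset
            (subset_convexHull ℝ _ (by exact_mod_cast haC))
            (subset_convexHull ℝ _ (by exact_mod_cast hbC))
            (openSegment_subset_segment ℝ a b hy1)
      exact (convex_convexHull ℝ _).segment_subset (hsub hwT) (hsub hzT) hqmem
    exact hq hqhull
  · -- exit towards p : p is inside the triangle
    have hpmem : p ∈ segment ℝ z w := by
      have h0 : q + (1:ℝ) • (p - q) ∈ segment ℝ z w := by
        refine mem_seg_param hz_eq hw_eq ?_ ?_
        · refine min_le_of_left_le ?_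
          rw [div_le_one hN]
          exact hzg.2.le
        · refine le_max_of_le_right ?_
          rw [le_div_iff₀ hN]
          linarith [hwg]
      simpa using h0
    have hpT : p ∈ convexHull ℝ ({a, c, y} : Set Pt) :=
      hTconv.segment_subset hzT hwT hpmem
    have hpa : p ≠ a := by
      intro hh
      rw [← hh] at hfa
      rw [fl_p] at hfa
      exact lt_irrefl 0 hfa
    have hpc : p ≠ c := by
      intro hh
      rw [← hh] at hfc
      rw [fl_p] at hfc
      exact lt_irrefl 0 hfc
    by_cases hpb : p = b
    · -- p = b : p lands on segment a c, contradicting convex position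
      subst hpb
      rw [show ({a, c, y} : Set Pt) = insert a {c, y} from rfl,
        convexHull_insert ⟨c, by simp⟩, mem_convexJoin] at hpT
      obtain ⟨a', ha', z0, hz0, hseg⟩ := hpT
      rw [Set.mem_singleton_iff] at ha'
      rw [ha'] at hseg
      rw [convexHull_pair] at hz0
      obtain ⟨u', hu', hp_eq⟩ := seg_param hseg
      obtain ⟨r, hr, hz0_eq⟩ := seg_param hz0
      obtain ⟨t, ht, hy_eq⟩ := open_param hy1
      rw [hz0_eq, hy_eq] at hp_eq
      have hurt1 : 0 ≤ u' * r := mul_nonneg hu'.1 hr.1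
      have hurt2 : u' * r ≤ 1 := mul_le_one₀ hu'.2 hr.1 hr.2
      have hμ : 0 < 1 - u' * r * t := by
        nlinarith [ht.1, ht.2, mul_nonneg (by linarith : (0:ℝ) ≤ 1 - u' * r) ht.1.le]
      have hmain : (1 - u' * r * t) • p =
          ((1 - u') + u' * r * (1 - t)) • a + (u' * (1 - r)) • c := by
        linear_combination (norm := module) hp_eq
      have hpseg : p ∈ segment ℝ a c := by
        refine ⟨((1 - u') + u' * r * (1 - t)) / (1 - u' * r * t),
          (u' * (1 - r)) / (1 - u' * r * t), ?_, ?_, ?_, ?_⟩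
        · apply div_nonneg _ hμ.le
          nlinarith [hu'.1, hu'.2, hr.1, hr.2, ht.1, ht.2, mul_nonneg hurt1 (by linarith [ht.2] : (0:ℝ) ≤ 1 - t)]
        · apply div_nonneg _ hμ.le
          nlinarith [hu'.1, hu'.2, hr.1, hr.2]
        · field_simp
          ring
        · rw [div_eq_inv_mul, div_eq_inv_mul, ← smul_smul, ← smul_smul, ← smul_add, ← hmain,
            smul_smul, inv_mul_cancel₀ hμ.ne', one_smul]
      have : p ∈ convexHull ℝ ((C : Set Pt) \ {p}) := by
        rw [← convexHull_pair] at hpseg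
        refine convexHull_mono ?_ hpseg
        intro x' hx'
        simp only [Set.mem_insert_iff, Set.mem_singleton_iff] at hx'
        rcases hx' with rfl | rfl
        · exact ⟨by exact_mod_cast haC, by simpa using Ne.symm hpa⟩
        · exact ⟨by exact_mod_cast hcC, by simpa using Ne.symm hpc⟩
      exact hC p hpC' this
    · by_cases hpd : p = d
      · -- p = d : symmetric, p lands on segment a c
        subst hpd
        rw [show ({a, c, y} : Set Pt) = insert a {c, y} from rfl,
          convexHull_insert ⟨c, by simp⟩, mem_convexJoin] at hpT
        obtain ⟨a', ha', z0, hz0, hseg⟩ := hpT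
        rw [Set.mem_singleton_iff] at ha'
        rw [ha'] at hseg
        rw [convexHull_pair] at hz0
        obtain ⟨u', hu', hp_eq⟩ := seg_param hseg
        obtain ⟨r, hr, hz0_eq⟩ := seg_param hz0
        obtain ⟨t, ht, hy_eq⟩ := open_param hy2
        rw [hz0_eq, hy_eq] at hp_eq
        have hurt1 : 0 ≤ u' * r := mul_nonneg hu'.1 hr.1
        have hurt2 : u' * r ≤ 1 := mul_le_one₀ hu'.2 hr.1 hr.2
        have hμ : 0 < 1 - u' * r * t := by
          nlinarith [ht.1, ht.2, mul_nonneg (by linarith : (0:ℝ) ≤ 1 - u' * r) ht.1.le]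
        have hmain : (1 - u' * r * t) • p =
            (1 - u') • a + (u' * (1 - r) + u' * r * (1 - t)) • c := by
          linear_combination (norm := module) hp_eq
        have hpseg : p ∈ segment ℝ a c := by
          refine ⟨(1 - u') / (1 - u' * r * t),
            (u' * (1 - r) + u' * r * (1 - t)) / (1 - u' * r * t), ?_, ?_, ?_, ?_⟩
          · apply div_nonneg _ hμ.le
            linarith [hu'.2]
          · apply div_nonneg _ hμ.le
            nlinarith [hu'.1, hu'.2, hr.1, hr.2, ht.1, ht.2, mul_nonneg hurt1 (by linarith [ht.2] : (0:ℝ) ≤ 1 - t)]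
          · field_simp
            ring
          · rw [div_eq_inv_mul, div_eq_inv_mul, ← smul_smul, ← smul_smul, ← smul_add, ← hmain,
              smul_smul, inv_mul_cancel₀ hμ.ne', one_smul]
        have : p ∈ convexHull ℝ ((C : Set Pt) \ {p}) := by
          rw [← convexHull_pair] at hpseg
          refine convexHull_mono ?_ hpseg
          intro x' hx'
          simp only [Set.mem_insert_iff, Set.mem_singleton_iff] at hx'
          rcases hx' with rfl | rfl
          · exact ⟨by exact_mod_cast haC, by simpa using Ne.symm hpa⟩
          · exact ⟨by exact_mod_cast hcC, by simpa using Ne.symm hpc⟩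
        exact hC p hpC' this
      · -- p is none of a,b,c,d : convex position violated
        have hsub : convexHull ℝ ({a, c, y} : Set Pt) ⊆ convexHull ℝ ((C : Set Pt) \ {p}) := by
          apply convexHull_min _ (convex_convexHull ℝ _)
          intro x hx
          simp only [Set.mem_insert_iff, Set.mem_singleton_iff] at hx
          rcases hx with rfl | rfl | rfl
          · exact subset_convexHull ℝ ((C : Set Pt) \ {p}) ⟨by exact_mod_cast haC, by simpa using Ne.symm hpa⟩
          · exact subset_convexHull ℝ ((C : Set Pt) \ {p}) ⟨by exact_mod_cast hcC, by simpa using Ne.symm hpc⟩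
          · refine (convex_convexHull ℝ _).segment_subset
              (subset_convexHull ℝ ((C : Set Pt) \ {p}) ⟨by exact_mod_cast haC, by simpa using Ne.symm hpa⟩)
              (subset_convexHull ℝ ((C : Set Pt) \ {p}) ⟨by exact_mod_cast hbC,
                by simpa using (fun hh => hpb hh.symm : b ≠ p)⟩)
              (openSegment_subset_segment ℝ a b hy1)
        exact hC p hpC' (hsub hpT)

lemma segCross_swap {a b c d : Pt} (h : SegCross a b c d) : SegCross c d a b := by
  obtain ⟨x, h1, h2, hu⟩ := h
  exact ⟨x, h2, h1, fun y hy1 hy2 => hu y hy2 hy1⟩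

lemma segCross_symm1 {a b c d : Pt} (h : SegCross a b c d) : SegCross b a c d := by
  obtain ⟨x, h1, h2, hu⟩ := h
  exact ⟨x, by rwa [openSegment_symm], h2, fun y hy1 hy2 => hu y (by rwa [segment_symm]) hy2⟩

lemma segCross_symm2 {a b c d : Pt} (h : SegCross a b c d) : SegCross a b d c :=
  segCross_swap (segCross_symm1 (segCross_swap h))

lemma side {C : Finset Pt} (hC : ConvexPos (C : Set Pt)) {q p a b c d : Pt}
    (haC : a ∈ C) (hbC : b ∈ C) (hcC : c ∈ C) (hdC : d ∈ C) (hpC : p ∈ C)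
    (hq : q ∉ convexHull ℝ (C : Set Pt))
    (hbc : b ≠ c) (hda : d ≠ a) (hac : a ≠ c)
    (hcr : SegCross a b c d)
    (hnab : ¬ SegCross q p a b) (hncd : ¬ SegCross q p c d) :
    ¬ SegCross a c q p := by
  intro h
  have hpC' : (p : Pt) ∈ (C : Set Pt) := by exact_mod_cast hpC
  have hqp : q ≠ p := by
    rintro rfl
    exact hq (subset_convexHull ℝ _ hpC')
  obtain ⟨y, hy1, hy2, -⟩ := hcr
  have hprod := opp hqp hac h
  rcases mul_neg_iff.mp hprod with ⟨h1, h2⟩ | ⟨h1, h2⟩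
  · exact core hC haC hbC hcC hdC hpC hq hbc hda hy1 hy2 h1 h2 hnab hncd h
  · exact core hC hcC hdC haC hbC hpC hq hda hbc hy2 hy1 h2 h1 hncd hnab
      (segCross_symm1 h)

lemma cross_shared_left {a b c d : Pt} (h : SegCross a b c d) (hac : a = c) :
    a = b ∧ c = d := by
  obtain ⟨x, hx1, hx2, hu⟩ := h
  have h1 := (hu a (left_mem_segment ℝ a b) (by rw [hac]; exact left_mem_segment ℝ c d)).symm
  rw [h1] at hx1 hx2
  refine ⟨left_mem_openSegment_iff.mp hx1, ?_⟩
  rw [hac] at hx2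
  exact left_mem_openSegment_iff.mp hx2

lemma cross_shared_lr {a b c d : Pt} (h : SegCross a b c d) (had : a = d) :
    a = b ∧ c = d := by
  obtain ⟨x, hx1, hx2, hu⟩ := h
  have h1 := (hu a (left_mem_segment ℝ a b) (by rw [had]; exact right_mem_segment ℝ c d)).symm
  rw [h1] at hx1 hx2
  refine ⟨left_mem_openSegment_iff.mp hx1, ?_⟩
  rw [had] at hx2
  exact right_mem_openSegment_iff.mp hx2

lemma cross_shared_rl {a b c d : Pt} (h : SegCross a b c d) (hbc : b = c) :
    a = b ∧ c = d := by
  obtain ⟨x, hx1, hx2, hu⟩ := h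
  have h1 := (hu b (right_mem_segment ℝ a b) (by rw [hbc]; exact left_mem_segment ℝ c d)).symm
  rw [h1] at hx1 hx2
  refine ⟨right_mem_openSegment_iff.mp hx1, ?_⟩
  rw [hbc] at hx2
  exact left_mem_openSegment_iff.mp hx2

lemma cross_shared_right {a b c d : Pt} (h : SegCross a b c d) (hbd : b = d) :
    a = b ∧ c = d := by
  obtain ⟨x, hx1, hx2, hu⟩ := h
  have h1 := (hu b (right_mem_segment ℝ a b) (by rw [hbd]; exact right_mem_segment ℝ c d)).symm
  rw [h1] at hx1 hx2
  refine ⟨right_mem_openSegment_iff.mp hx1, ?_⟩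
  rw [hbd] at hx2
  exact right_mem_openSegment_iff.mp hx2

lemma cross_nondeg {a b c d : Pt} (h : SegCross a b c d) (hab : a = b) :
    a ∈ openSegment ℝ c d := by
  obtain ⟨x, hx1, hx2, _⟩ := h
  rw [← hab, openSegment_same, Set.mem_singleton_iff] at hx1
  rwa [hx1] at hx2

end UncrossAux

open UncrossAux in
/-- Let `q` be outside the convex hull of `C` (in convex position), and `s = qp`
a segment crossing no segment of `S` (all of whose endpoints are in `C`), while
the supporting line of `s` crosses some segment of `S`. Then no flip on two
segments of `S` can insert a segment crossing `s`: `s` is uncrossable. -/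
theorem uncrossable_segment (C : Finset Pt) (hC : ConvexPos (C : Set Pt))
    (q p : Pt) (hp : p ∈ C) (hq : q ∉ convexHull ℝ (C : Set Pt))
    (S : Finset (Pt × Pt)) (hends : ∀ e ∈ S, e.1 ∈ C ∧ e.2 ∈ C)
    (hnocross : ∀ e ∈ S, ¬ SegCross q p e.1 e.2)
    (hline : ∃ e ∈ S, LineThroughCrosses q p e.1 e.2)
    (e1 e2 f1 f2 : Pt × Pt)
    (he1 : e1 ∈ S) (he2 : e2 ∈ S) (hne : e1 ≠ e2)
    (hcross : SegCross e1.1 e1.2 e2.1 e2.2)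
    (hends' : ({f1.1, f1.2, f2.1, f2.2} : Multiset Pt) = ({e1.1, e1.2, e2.1, e2.2} : Multiset Pt))
    (hnc : ¬ SegCross f1.1 f1.2 f2.1 f2.2) :
    ¬ SegCross f1.1 f1.2 q p ∧ ¬ SegCross f2.1 f2.2 q p := by
  classical
  obtain ⟨a, b⟩ := e1
  obtain ⟨c, d⟩ := e2
  obtain ⟨x1, x2⟩ := f1
  obtain ⟨x3, x4⟩ := f2
  replace hends' : ({x1, x2, x3, x4} : Multiset Pt) = ({a, b, c, d} : Multiset Pt) := hends'
  replace hcross : SegCross a b c d := hcross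
  replace hne : (a, b) ≠ (c, d) := hne
  show ¬ SegCross x1 x2 q p ∧ ¬ SegCross x3 x4 q p
  have haC : a ∈ C := (hends _ he1).1
  have hbC : b ∈ C := (hends _ he1).2
  have hcC : c ∈ C := (hends _ he2).1
  have hdC : d ∈ C := (hends _ he2).2
  have hnab : ¬ SegCross q p a b := hnocross _ he1
  have hncd : ¬ SegCross q p c d := hnocross _ he2
  -- distinctness of the four endpoints
  have hcross' : SegCross a b c d := hcross
  have hac : a ≠ c := by
    intro hh
    obtain ⟨h1, h2⟩ := cross_shared_left hcross' hh
    exact hne (by rw [Prod.mk.injEq]; exact ⟨hh, h1.symm.trans (hh.trans h2)⟩)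
  have had : a ≠ d := by
    intro hh
    obtain ⟨h1, h2⟩ := cross_shared_lr hcross' hh
    exact hne (by rw [Prod.mk.injEq]; exact ⟨hh.trans h2.symm, h1.symm.trans hh⟩)
  have hbc : b ≠ c := by
    intro hh
    obtain ⟨h1, h2⟩ := cross_shared_rl hcross' hh
    exact hne (by rw [Prod.mk.injEq]; exact ⟨h1.trans hh, hh.trans h2⟩)
  have hbd : b ≠ d := by
    intro hh
    obtain ⟨h1, h2⟩ := cross_shared_right hcross' hh
    exact hne (by rw [Prod.mk.injEq]; exact ⟨h1.trans (hh.trans h2.symm), hh⟩)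
  have hab : a ≠ b := by
    intro hh
    have hmem' := cross_nondeg hcross' hh
    have : a ∈ convexHull ℝ ((C : Set Pt) \ {a}) := by
      have h2 : a ∈ segment ℝ c d := openSegment_subset_segment ℝ c d hmem'
      rw [← convexHull_pair] at h2
      refine convexHull_mono ?_ h2
      intro u hu'
      simp only [Set.mem_insert_iff, Set.mem_singleton_iff] at hu'
      rcases hu' with rfl | rfl
      · exact ⟨by exact_mod_cast hcC, by simpa using Ne.symm hac⟩
      · exact ⟨by exact_mod_cast hdC, by simpa using Ne.symm had⟩
    exact hC a (by exact_mod_cast haC) this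
  have hcd : c ≠ d := by
    intro hh
    have hmem' := cross_nondeg (segCross_swap hcross') hh
    have : c ∈ convexHull ℝ ((C : Set Pt) \ {c}) := by
      have h2 : c ∈ segment ℝ a b := openSegment_subset_segment ℝ a b hmem'
      rw [← convexHull_pair] at h2
      refine convexHull_mono ?_ h2
      intro u hu'
      simp only [Set.mem_insert_iff, Set.mem_singleton_iff] at hu'
      rcases hu' with rfl | rfl
      · exact ⟨by exact_mod_cast haC, by simpa using hac⟩
      · exact ⟨by exact_mod_cast hbC, by simpa using hbc⟩
    exact hC c (by exact_mod_cast hcC) this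
  -- the twelve non-crossing facts
  have Hab : ¬ SegCross a b q p := fun h => hnab (segCross_swap h)
  have Hba : ¬ SegCross b a q p := fun h => hnab (segCross_symm2 (segCross_swap h))
  have Hcd : ¬ SegCross c d q p := fun h => hncd (segCross_swap h)
  have Hdc : ¬ SegCross d c q p := fun h => hncd (segCross_symm2 (segCross_swap h))
  have Hac : ¬ SegCross a c q p :=
    side hC haC hbC hcC hdC hp hq hbc had.symm hac hcross' hnab hncd
  have Hca : ¬ SegCross c a q p := fun h => Hac (segCross_symm1 h)
  have Had : ¬ SegCross a d q p :=
    side hC haC hbC hdC hcC hp hq hbd hac.symm had (segCross_symm2 hcross') hnab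
      (fun h => hncd (segCross_symm2 h))
  have Hda : ¬ SegCross d a q p := fun h => Had (segCross_symm1 h)
  have Hbc : ¬ SegCross b c q p :=
    side hC hbC haC hcC hdC hp hq hac hbd.symm hbc (segCross_symm1 hcross')
      (fun h => hnab (segCross_symm2 h)) hncd
  have Hcb : ¬ SegCross c b q p := fun h => Hbc (segCross_symm1 h)
  have Hbd : ¬ SegCross b d q p :=
    side hC hbC haC hdC hcC hp hq had hbc.symm hbd
      (segCross_symm2 (segCross_symm1 hcross'))
      (fun h => hnab (segCross_symm2 h)) (fun h => hncd (segCross_symm2 h))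
  have Hdb : ¬ SegCross d b q p := fun h => Hbd (segCross_symm1 h)
  -- the inserted segments have endpoints among a,b,c,d, all distinct
  have hnodup : ({a, b, c, d} : Multiset Pt).Nodup := by
    simp only [Multiset.insert_eq_cons, Multiset.nodup_cons, Multiset.mem_cons,
      Multiset.mem_singleton, Multiset.nodup_singleton, and_true]
    push_neg
    exact ⟨⟨hab, hac, had⟩, ⟨hbc, hbd⟩, hcd⟩
  have hnodup' : ({x1, x2, x3, x4} : Multiset Pt).Nodup := by
    rw [hends']; exact hnodup
  have hx12 : x1 ≠ x2 := by
    simp only [Multiset.insert_eq_cons, Multiset.nodup_cons, Multiset.mem_cons,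
      Multiset.mem_singleton] at hnodup'
    push_neg at hnodup'
    exact hnodup'.1.1
  have hx34 : x3 ≠ x4 := by
    simp only [Multiset.insert_eq_cons, Multiset.nodup_cons, Multiset.mem_cons,
      Multiset.mem_singleton, Multiset.nodup_singleton, and_true] at hnodup'
    push_neg at hnodup'
    exact hnodup'.2.2
  have hmem : ∀ u : Pt, u ∈ ({x1, x2, x3, x4} : Multiset Pt) →
      u = a ∨ u = b ∨ u = c ∨ u = d := by
    intro u hu'
    rw [hends'] at hu'
    simpa using hu'
  have key : ∀ u w : Pt, (u = a ∨ u = b ∨ u = c ∨ u = d) →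
      (w = a ∨ w = b ∨ w = c ∨ w = d) → u ≠ w → ¬ SegCross u w q p := by
    rintro u w (rfl | rfl | rfl | rfl) (rfl | rfl | rfl | rfl) hne' <;>
      first
        | exact absurd rfl hne'
        | assumption
  exact ⟨key x1 x2 (hmem x1 (by simp)) (hmem x2 (by simp)) hx12,
    key x3 x4 (hmem x3 (by simp)) (hmem x4 (by simp)) hx34⟩
end
end
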